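/- arXiv:2508.17915 — 4 statements merged into one kernel-verified Lean document; each statement's English description precedes it below -/
import Mathlib

section
/- Let d ≥ 2 be an integer. Then 2 · Σ_{m=0}^{d−2} m · s_d(m) = (d − 2) · Alt(d). -/
open Finset Equiv
open scoped Classical


/-- A permutation `σ` of `Fin d` (thought of as `{1, …, d}`) is alternating if
`σ(1) > σ(2) < σ(3) > σ(4) < ⋯`.  In 0-based indexing: for consecutive indices
`i, j = i+1`, if `i` is even then `σ i > σ j`, and if `i` is odd then `σ i < σ j`. -/
def IsAlternating {d : ℕ} (σ : Equiv.Perm (Fin d)) : Prop :=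
  ∀ i j : Fin d, (j : ℕ) = (i : ℕ) + 1 →
    (((i : ℕ) % 2 = 0 → σ j < σ i) ∧ ((i : ℕ) % 2 = 1 → σ i < σ j))

/-- `Alt d` : the number of alternating permutations of `{1, …, d}` (Euler zigzag number). -/
noncomputable def Alt (d : ℕ) : ℕ :=
  Nat.card {σ : Equiv.Perm (Fin d) // IsAlternating σ}

/-- `swapStat σ` : the number of values `i` (with `i+1` also a value) such that
`σ⁻¹(i) < σ⁻¹(i+1) − 1`, i.e. `σ⁻¹(i) + 1 < σ⁻¹(i+1)`. -/
noncomputable def swapStat {d : ℕ} (σ : Equiv.Perm (Fin d)) : ℕ :=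
  Nat.card {p : Fin d × Fin d // (p.2 : ℕ) = (p.1 : ℕ) + 1 ∧
    ((σ⁻¹ p.1 : Fin d) : ℕ) + 1 < ((σ⁻¹ p.2 : Fin d) : ℕ)}

/-- `sSwap d m` : the number of alternating permutations `σ` of `{1, …, d}` with
`swapStat σ = m`. -/
noncomputable def sSwap (d m : ℕ) : ℕ :=
  Nat.card {σ : Equiv.Perm (Fin d) // IsAlternating σ ∧ swapStat σ = m}

/-- the permutation of values sending `k ↦ d-1`, `v ↦ v-1` for `v > k`, fixing `v < k`. -/
def promote {d : ℕ} (k : Fin d) : Equiv.Perm (Fin d) where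
  toFun v := ⟨if (v : ℕ) < k then (v : ℕ) else if (v : ℕ) = k then d - 1 else (v : ℕ) - 1,
    by have := v.isLt; have := k.isLt; split_ifs <;> omega⟩
  invFun w := ⟨if (w : ℕ) < k then (w : ℕ) else if (w : ℕ) = d - 1 then (k : ℕ) else (w : ℕ) + 1,
    by have := w.isLt; have := k.isLt; split_ifs <;> omega⟩
  left_inv v := by
    have h1 := v.isLt; have h2 := k.isLt
    apply Fin.ext; simp only
    split_ifs <;> simp_all <;> omega
  right_inv w := by
    have h1 := w.isLt; have h2 := k.isLt
    apply Fin.ext; simp only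
    split_ifs <;> simp_all <;> omega

lemma promote_val {d : ℕ} (k v : Fin d) :
    (promote k v : ℕ) = if (v : ℕ) < k then (v : ℕ) else if (v : ℕ) = k then d - 1 else (v : ℕ) - 1 :=
  rfl

lemma promote_symm_val {d : ℕ} (k w : Fin d) :
    ((promote k)⁻¹ w : ℕ) = if (w : ℕ) < k then (w : ℕ) else if (w : ℕ) = d - 1 then (k : ℕ) else (w : ℕ) + 1 :=
  rfl

lemma promote_self {d : ℕ} (k : Fin d) : (promote k k : ℕ) = d - 1 := by
  rw [promote_val]; simp

lemma promote_fix {d : ℕ} {k v : Fin d} (h : (v : ℕ) < k) : promote k v = v := by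
  apply Fin.ext; rw [promote_val]; simp [h]

lemma promote_lt_top {d : ℕ} {k v : Fin d} (h : v ≠ k) : (promote k v : ℕ) < d - 1 := by
  have h1 := v.isLt; have h2 := k.isLt
  have : (v : ℕ) ≠ k := fun hc => h (Fin.ext hc)
  rw [promote_val]; split_ifs <;> omega

lemma promote_mono {d : ℕ} {k v w : Fin d} (hv : v ≠ k) (hw : w ≠ k) :
    ((v : ℕ) < w ↔ (promote k v : ℕ) < (promote k w : ℕ)) := by
  have h1 := v.isLt; have h2 := k.isLt; have h3 := w.isLt
  have hv' : (v : ℕ) ≠ k := fun hc => hv (Fin.ext hc)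
  have hw' : (w : ℕ) ≠ k := fun hc => hw (Fin.ext hc)
  rw [promote_val, promote_val]; split_ifs <;> omega

noncomputable def altF (d : ℕ) : Finset (Equiv.Perm (Fin d)) := univ.filter IsAlternating

noncomputable def pairF (d : ℕ) : Finset (Fin d × Fin d) :=
  univ.filter fun p => (p.2 : ℕ) = (p.1 : ℕ) + 1

abbrev acond {d : ℕ} (p : Fin d × Fin d) (σ : Equiv.Perm (Fin d)) : Prop :=
  ((σ⁻¹ p.1 : Fin d) : ℕ) + 1 < ((σ⁻¹ p.2 : Fin d) : ℕ)

abbrev bcond {d : ℕ} (p : Fin d × Fin d) (σ : Equiv.Perm (Fin d)) : Prop :=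
  ((σ⁻¹ p.2 : Fin d) : ℕ) + 1 < ((σ⁻¹ p.1 : Fin d) : ℕ)

abbrev ccond {d : ℕ} (p : Fin d × Fin d) (σ : Equiv.Perm (Fin d)) : Prop :=
  ((σ⁻¹ p.1 : Fin d) : ℕ) + 1 = ((σ⁻¹ p.2 : Fin d) : ℕ) ∨
  ((σ⁻¹ p.2 : Fin d) : ℕ) + 1 = ((σ⁻¹ p.1 : Fin d) : ℕ)

lemma Alt_eq (d : ℕ) : Alt d = (altF d).card := by
  rw [Alt, Nat.card_eq_fintype_card, Fintype.card_subtype]; rfl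

lemma sSwap_eq (d m : ℕ) :
    sSwap d m = ((altF d).filter fun σ => swapStat σ = m).card := by
  rw [sSwap, Nat.card_eq_fintype_card, Fintype.card_subtype, altF, filter_filter]

lemma swapStat_eq {d : ℕ} (σ : Equiv.Perm (Fin d)) :
    swapStat σ = ((pairF d).filter fun p => acond p σ).card := by
  rw [swapStat, Nat.card_eq_fintype_card, Fintype.card_subtype, pairF, filter_filter]

lemma pairF_card (d : ℕ) : (pairF d).card = d - 1 := by
  rw [← Finset.card_range (d-1)]
  refine Finset.card_bij' (fun p _ => (p.1 : ℕ))
    (fun m hm => ((⟨m, by simp only [mem_range] at hm; omega⟩ : Fin d),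
                  (⟨m+1, by simp only [mem_range] at hm; omega⟩ : Fin d))) ?hi ?hj ?left ?right
  case hi =>
    intro p hp
    simp only [pairF, mem_filter, mem_univ, true_and] at hp
    have := p.2.isLt
    simp only [mem_range]; omega
  case hj =>
    intro m hm
    simp [pairF]
  case left =>
    intro p hp
    simp only [pairF, mem_filter, mem_univ, true_and] at hp
    obtain ⟨⟨a, ha⟩, ⟨b, hb⟩⟩ := p
    rw [Prod.ext_iff]
    refine ⟨Fin.ext ?_, Fin.ext ?_⟩ <;> simp_all
  case right =>
    intro m hm; rfl

lemma swapStat_lt {d : ℕ} (hd : 2 ≤ d) (σ : Equiv.Perm (Fin d)) : swapStat σ < d - 1 := by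
  rw [swapStat_eq]
  have hsub : ((pairF d).filter fun p => acond p σ) ⊆ pairF d := filter_subset _ _
  have hle : ((pairF d).filter fun p => acond p σ).card ≤ d - 1 :=
    (pairF_card d) ▸ Finset.card_le_card hsub
  rcases lt_or_eq_of_le hle with h | h
  · exact h
  exfalso
  have heq : ((pairF d).filter fun p => acond p σ) = pairF d :=
    Finset.eq_of_subset_of_card_le hsub (by rw [pairF_card, h])
  have hall : ∀ x y : Fin d, (y : ℕ) = (x : ℕ) + 1 →
      ((σ⁻¹ x : Fin d) : ℕ) + 1 < ((σ⁻¹ y : Fin d) : ℕ) := by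
    intro x y hxy
    have hm : (x, y) ∈ pairF d := by simp [pairF, hxy]
    rw [← heq] at hm
    exact (Finset.mem_filter.mp hm).2
  have key : ∀ a : ℕ, ∀ h : a < d, 2 * a ≤ ((σ⁻¹ ⟨a, h⟩ : Fin d) : ℕ) := by
    intro a
    induction a with
    | zero => intro _; omega
    | succ n ih =>
      intro hn
      have hn' : n < d := by omega
      have h1 := ih hn'
      have h2 := hall ⟨n, hn'⟩ ⟨n+1, hn⟩ rfl
      omega
  have hd' : d - 1 < d := by omega
  have h3 := key (d-1) hd'
  have h4 := (σ⁻¹ (⟨d-1, hd'⟩ : Fin d)).isLt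
  omega

lemma swap_compare {d : ℕ} {p : Fin d × Fin d} (hp : (p.2 : ℕ) = (p.1 : ℕ) + 1) {a b : Fin d}
    (h1 : ¬(a = p.1 ∧ b = p.2)) (h2 : ¬(a = p.2 ∧ b = p.1)) :
    (a < b ↔ Equiv.swap p.1 p.2 a < Equiv.swap p.1 p.2 b) := by
  rw [Equiv.swap_apply_def, Equiv.swap_apply_def]
  split_ifs <;> simp only [Fin.lt_def, Fin.ext_iff, not_and] at * <;> omega

lemma alt_swap {d : ℕ} {p : Fin d × Fin d} (hp : (p.2 : ℕ) = (p.1 : ℕ) + 1)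
    {σ : Equiv.Perm (Fin d)} (hσ : IsAlternating σ)
    (hg1 : ((σ⁻¹ p.1 : Fin d) : ℕ) + 1 ≠ ((σ⁻¹ p.2 : Fin d) : ℕ))
    (hg2 : ((σ⁻¹ p.2 : Fin d) : ℕ) + 1 ≠ ((σ⁻¹ p.1 : Fin d) : ℕ)) :
    IsAlternating (Equiv.swap p.1 p.2 * σ) := by
  have key : ∀ a b : Fin d, (b : ℕ) = (a : ℕ) + 1 →
      ¬(σ a = p.1 ∧ σ b = p.2) ∧ ¬(σ a = p.2 ∧ σ b = p.1) := by
    intro a b hab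
    constructor
    · rintro ⟨ha, hb⟩
      apply hg1
      rw [← ha, ← hb, Equiv.Perm.inv_eq_iff_eq.mpr rfl, Equiv.Perm.inv_eq_iff_eq.mpr rfl]
      omega
    · rintro ⟨ha, hb⟩
      apply hg2
      rw [← ha, ← hb, Equiv.Perm.inv_eq_iff_eq.mpr rfl, Equiv.Perm.inv_eq_iff_eq.mpr rfl]
      omega
  intro i j hij
  obtain ⟨k1, k2⟩ := key i j hij
  obtain ⟨m1, m2⟩ := hσ i j hij
  constructor
  · intro hpar
    simp only [Equiv.Perm.mul_apply]
    rw [← swap_compare hp (by tauto) (by tauto)]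
    exact m1 hpar
  · intro hpar
    simp only [Equiv.Perm.mul_apply]
    rw [← swap_compare hp (by tauto) (by tauto)]
    exact m2 hpar

lemma swap_inv_apply {d : ℕ} (p : Fin d × Fin d) (σ : Equiv.Perm (Fin d)) :
    (Equiv.swap p.1 p.2 * σ)⁻¹ p.1 = σ⁻¹ p.2 ∧ (Equiv.swap p.1 p.2 * σ)⁻¹ p.2 = σ⁻¹ p.1 := by
  rw [mul_inv_rev, Equiv.swap_inv]
  constructor <;> simp [Equiv.Perm.mul_apply]

lemma AB_eq {d : ℕ} {p : Fin d × Fin d} (hp : (p.2 : ℕ) = (p.1 : ℕ) + 1) :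
    ((altF d).filter fun σ => acond p σ).card = ((altF d).filter fun σ => bcond p σ).card := by
  refine Finset.card_bij' (fun σ _ => Equiv.swap p.1 p.2 * σ)
    (fun σ _ => Equiv.swap p.1 p.2 * σ) ?hi ?hj ?left ?right
  case hi =>
    intro σ hσ
    simp only [altF, mem_filter, mem_univ, true_and] at hσ ⊢
    obtain ⟨halt, hc⟩ := hσ
    obtain ⟨e1, e2⟩ := swap_inv_apply p σ
    exact ⟨alt_swap hp halt (by omega) (by omega), by rw [bcond, e1, e2]; omega⟩
  case hj =>
    intro σ hσ
    simp only [altF, mem_filter, mem_univ, true_and] at hσ ⊢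
    obtain ⟨halt, hc⟩ := hσ
    obtain ⟨e1, e2⟩ := swap_inv_apply p σ
    exact ⟨alt_swap hp halt (by omega) (by omega), by rw [acond, e1, e2]; omega⟩
  case left =>
    intro σ _
    show Equiv.swap p.1 p.2 * (Equiv.swap p.1 p.2 * σ) = σ
    rw [← mul_assoc, Equiv.swap_mul_self, one_mul]
  case right =>
    intro σ _
    show Equiv.swap p.1 p.2 * (Equiv.swap p.1 p.2 * σ) = σ
    rw [← mul_assoc, Equiv.swap_mul_self, one_mul]

lemma tri_eq {d : ℕ} {p : Fin d × Fin d} (hp : (p.2 : ℕ) = (p.1 : ℕ) + 1) :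
    ((altF d).filter fun σ => acond p σ).card + ((altF d).filter fun σ => bcond p σ).card +
      ((altF d).filter fun σ => ccond p σ).card = (altF d).card := by
  have hne : ∀ σ : Equiv.Perm (Fin d), ((σ⁻¹ p.1 : Fin d) : ℕ) ≠ ((σ⁻¹ p.2 : Fin d) : ℕ) := by
    intro σ h
    have : σ⁻¹ p.1 = σ⁻¹ p.2 := Fin.ext h
    have : p.1 = p.2 := (Equiv.injective σ⁻¹) this
    rw [this] at hp; omega
  have h1 : ((altF d).filter fun σ => acond p σ).card +
      ((altF d).filter fun σ => ¬ acond p σ).card = (altF d).card :=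
    Finset.card_filter_add_card_filter_not _
  have h2 : (((altF d).filter fun σ => ¬ acond p σ).filter fun σ => bcond p σ).card +
      (((altF d).filter fun σ => ¬ acond p σ).filter fun σ => ¬ bcond p σ).card =
      ((altF d).filter fun σ => ¬ acond p σ).card :=
    Finset.card_filter_add_card_filter_not _
  have e1 : (((altF d).filter fun σ => ¬ acond p σ).filter fun σ => bcond p σ) =
      ((altF d).filter fun σ => bcond p σ) := by
    rw [filter_filter]
    apply Finset.filter_congr
    intro σ _
    unfold acond bcond
    constructor
    · tauto
    · intro h; exact ⟨by omega, h⟩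
  have e2 : (((altF d).filter fun σ => ¬ acond p σ).filter fun σ => ¬ bcond p σ) =
      ((altF d).filter fun σ => ccond p σ) := by
    rw [filter_filter]
    apply Finset.filter_congr
    intro σ _
    have := hne σ
    unfold acond bcond ccond
    constructor
    · intro h; omega
    · intro h; omega
  rw [e1, e2] at h2
  omega

lemma promote_symm_last {d : ℕ} (hd : 1 ≤ d) (k : Fin d) :
    (promote k)⁻¹ ⟨d-1, by omega⟩ = k := by
  apply Fin.ext
  rw [promote_symm_val]
  have := k.isLt
  simp only [Fin.val_mk]
  split_ifs <;> omega

lemma promote_symm_fix {d : ℕ} {k w : Fin d} (h : (w : ℕ) < k) : (promote k)⁻¹ w = w := by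
  apply Fin.ext; rw [promote_symm_val]; simp [h]

lemma promote_symm_mono {d : ℕ} {k v w : Fin d} (hv : (v : ℕ) ≠ d - 1) (hw : (w : ℕ) ≠ d - 1) :
    ((v : ℕ) < w ↔ ((promote k)⁻¹ v : ℕ) < ((promote k)⁻¹ w : ℕ)) := by
  have h1 := v.isLt; have h2 := k.isLt; have h3 := w.isLt
  rw [promote_symm_val, promote_symm_val]; split_ifs <;> omega

/-- position of the maximum value -/
noncomputable def topPos {d : ℕ} (hd : 2 ≤ d) (τ : Equiv.Perm (Fin d)) : Fin d :=
  τ⁻¹ ⟨d-1, by omega⟩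

def adjTop {d : ℕ} (hd : 2 ≤ d) (τ : Equiv.Perm (Fin d)) (z : Fin d) : Prop :=
  (z : ℕ) + 1 = ((topPos hd τ : Fin d) : ℕ) ∨ ((topPos hd τ : Fin d) : ℕ) + 1 = (z : ℕ)

lemma nbr_exists {d : ℕ} (hd : 2 ≤ d) (τ : Equiv.Perm (Fin d)) :
    ∃ z : Fin d, adjTop hd τ z ∧ ∀ w : Fin d, adjTop hd τ w → (τ w : ℕ) ≤ (τ z : ℕ) := by
  have hy := (topPos hd τ).isLt
  have hne : (univ.filter (adjTop hd τ)).Nonempty := by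
    by_cases h0 : ((topPos hd τ : Fin d) : ℕ) + 1 < d
    · exact ⟨⟨((topPos hd τ : Fin d) : ℕ) + 1, h0⟩, by
        simp only [mem_filter, mem_univ, true_and, adjTop, Fin.val_mk]
        exact Or.inr trivial⟩
    · exact ⟨⟨((topPos hd τ : Fin d) : ℕ) - 1, by omega⟩, by
        simp only [mem_filter, mem_univ, true_and, adjTop, Fin.val_mk]; omega⟩
  obtain ⟨z, hz, hmax⟩ := Finset.exists_max_image _ (fun w => ((τ w : Fin d) : ℕ)) hne
  refine ⟨z, (mem_filter.mp hz).2, fun w hw => hmax w ?_⟩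
  simp only [mem_filter, mem_univ, true_and]
  exact hw

noncomputable def nbr {d : ℕ} (hd : 2 ≤ d) (τ : Equiv.Perm (Fin d)) : Fin d :=
  (nbr_exists hd τ).choose

lemma nbr_adj {d : ℕ} (hd : 2 ≤ d) (τ : Equiv.Perm (Fin d)) : adjTop hd τ (nbr hd τ) :=
  (nbr_exists hd τ).choose_spec.1

lemma nbr_max {d : ℕ} (hd : 2 ≤ d) (τ : Equiv.Perm (Fin d)) {z : Fin d} (hz : adjTop hd τ z) :
    (τ z : ℕ) ≤ (τ (nbr hd τ) : ℕ) :=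
  (nbr_exists hd τ).choose_spec.2 z hz

lemma nbr_ne_top {d : ℕ} (hd : 2 ≤ d) (τ : Equiv.Perm (Fin d)) : nbr hd τ ≠ topPos hd τ := by
  have h := nbr_adj hd τ
  intro hc
  rw [adjTop, hc] at h
  omega

noncomputable def psi {d : ℕ} (hd : 2 ≤ d) (τ : Equiv.Perm (Fin d)) : Fin d × Fin d :=
  if h : ((τ (nbr hd τ) : Fin d) : ℕ) + 1 < d then (τ (nbr hd τ), ⟨(τ (nbr hd τ) : ℕ) + 1, h⟩)
  else (⟨0, by omega⟩, ⟨1, by omega⟩)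

lemma topPos_even {d : ℕ} (hd : 2 ≤ d) {τ : Equiv.Perm (Fin d)} (hτ : IsAlternating τ) :
    ((topPos hd τ : Fin d) : ℕ) % 2 = 0 := by
  have hτy : τ (topPos hd τ) = ⟨d-1, by omega⟩ := by
    rw [topPos]; exact Equiv.apply_symm_apply τ _
  by_contra hodd
  have h1 : ((topPos hd τ : Fin d) : ℕ) % 2 = 1 := Nat.mod_two_eq_zero_or_one _ |>.resolve_left hodd
  have hy1 : 1 ≤ ((topPos hd τ : Fin d) : ℕ) := by omega
  have hyd := (topPos hd τ).isLt
  obtain ⟨u, hu_val⟩ : ∃ u : Fin d, (u : ℕ) = ((topPos hd τ : Fin d) : ℕ) - 1 :=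
    ⟨⟨((topPos hd τ : Fin d) : ℕ) - 1, by omega⟩, rfl⟩
  have hlt := (hτ u (topPos hd τ) (by omega)).1 (by omega)
  rw [hτy, Fin.lt_def] at hlt
  have h2 := (τ u).isLt
  simp only [Fin.val_mk] at hlt
  omega

lemma top_val_ne {d : ℕ} (hd : 2 ≤ d) (τ : Equiv.Perm (Fin d)) {z : Fin d}
    (hz : z ≠ topPos hd τ) : ((τ z : Fin d) : ℕ) ≠ d - 1 := by
  intro hc
  apply hz
  have : τ z = ⟨d-1, by omega⟩ := Fin.ext hc
  rw [topPos, ← this, Equiv.Perm.inv_eq_iff_eq.mpr rfl]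

lemma psi_spec {d : ℕ} (hd : 2 ≤ d) (τ : Equiv.Perm (Fin d)) :
    ∃ h : ((τ (nbr hd τ) : Fin d) : ℕ) + 1 < d,
      psi hd τ = (τ (nbr hd τ), ⟨(τ (nbr hd τ) : ℕ) + 1, h⟩) := by
  have h4 : (τ (nbr hd τ) : ℕ) ≠ d - 1 := top_val_ne hd τ (nbr_ne_top hd τ)
  have h3 := (τ (nbr hd τ)).isLt
  refine ⟨by omega, ?_⟩
  rw [psi, dif_pos]

lemma psi_mem_pairF {d : ℕ} (hd : 2 ≤ d) (τ : Equiv.Perm (Fin d)) : psi hd τ ∈ pairF d := by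
  obtain ⟨h, hspec⟩ := psi_spec hd τ
  rw [hspec]
  simp [pairF]

lemma forward_lemma {d : ℕ} (hd : 2 ≤ d) {p : Fin d × Fin d} (hp : (p.2 : ℕ) = (p.1 : ℕ) + 1)
    {σ : Equiv.Perm (Fin d)} (hσ : IsAlternating σ) (hcc : ccond p σ) :
    IsAlternating (promote p.2 * σ) ∧ psi hd (promote p.2 * σ) = p := by
  obtain ⟨x, hx⟩ : ∃ x, x = σ⁻¹ p.1 := ⟨_, rfl⟩
  obtain ⟨y, hy⟩ : ∃ y, y = σ⁻¹ p.2 := ⟨_, rfl⟩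
  have hxv : σ x = p.1 := by rw [hx]; exact Equiv.apply_symm_apply σ _
  have hyv : σ y = p.2 := by rw [hy]; exact Equiv.apply_symm_apply σ _
  rw [ccond, ← hx, ← hy] at hcc
  have hxyne : x ≠ y := by intro h; rw [h, hyv] at hxv; rw [← hxv] at hp; omega
  -- F1 : y is at even position
  have F1 : (y : ℕ) % 2 = 0 := by
    rcases hcc with h | h
    · rcases Nat.mod_two_eq_zero_or_one (x : ℕ) with hpar | hpar
      · exfalso
        have hlt := (hσ x y (by omega)).1 hpar
        rw [hxv, hyv, Fin.lt_def] at hlt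
        omega
      · omega
    · rcases Nat.mod_two_eq_zero_or_one (y : ℕ) with hpar | hpar
      · exact hpar
      · exfalso
        have hlt := (hσ y x (by omega)).2 hpar
        rw [hxv, hyv, Fin.lt_def] at hlt
        omega
  -- F2 : neighbors of y have small values
  have F2 : ∀ z : Fin d, ((z : ℕ) + 1 = (y : ℕ) ∨ (y : ℕ) + 1 = (z : ℕ)) →
      ((σ z : Fin d) : ℕ) < (p.2 : ℕ) := by
    intro z hz
    rcases hz with h | h
    · have hlt := (hσ z y (by omega)).2 (by omega)
      rw [hyv, Fin.lt_def] at hlt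
      exact hlt
    · have hlt := (hσ y z (by omega)).1 (by omega)
      rw [hyv, Fin.lt_def] at hlt
      exact hlt
  have hα : IsAlternating (promote p.2 * σ) := by
    intro i j hij
    have hijne : i ≠ j := by intro h; rw [h] at hij; omega
    simp only [Equiv.Perm.mul_apply]
    by_cases hi : i = y
    · have hieven : (i : ℕ) % 2 = 0 := by rw [hi]; exact F1
      refine ⟨fun _ => ?_, fun h => absurd h (by omega)⟩
      have h1 : σ j ≠ p.2 := by
        intro hc
        have : j = y := Equiv.injective σ (by rw [hc, hyv])
        rw [← hi] at this; exact hijne this.symm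
      have h2 : (promote p.2 (σ j) : ℕ) < d - 1 := promote_lt_top (by
        intro hc; exact h1 (by rw [hc]))
      rw [Fin.lt_def, hi, hyv, promote_self]
      omega
    · by_cases hj : j = y
      · have hjodd : (i : ℕ) % 2 = 1 := by
          have : (j : ℕ) % 2 = 0 := by rw [hj]; exact F1
          omega
        refine ⟨fun h => absurd h (by omega), fun _ => ?_⟩
        have h1 : σ i ≠ p.2 := by
          intro hc
          exact hi (Equiv.injective σ (by rw [hc, hyv]))
        have h2 : (promote p.2 (σ i) : ℕ) < d - 1 := promote_lt_top (by
          intro hc; exact h1 (by rw [hc]))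
        rw [Fin.lt_def, hj, hyv, promote_self]
        omega
      · have h1 : σ i ≠ p.2 := fun hc => hi (Equiv.injective σ (by rw [hc, hyv]))
        have h2 : σ j ≠ p.2 := fun hc => hj (Equiv.injective σ (by rw [hc, hyv]))
        obtain ⟨m1, m2⟩ := hσ i j hij
        constructor
        · intro hpar
          rw [Fin.lt_def, ← promote_mono h2 h1]
          rw [Fin.lt_def] at m1
          exact m1 hpar
        · intro hpar
          rw [Fin.lt_def, ← promote_mono h1 h2]
          rw [Fin.lt_def] at m2
          exact m2 hpar
  refine ⟨hα, ?_⟩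
  -- recovery
  have hτy : (promote p.2 * σ) y = ⟨d - 1, by omega⟩ := by
    apply Fin.ext
    simp only [Equiv.Perm.mul_apply, hyv]
    exact promote_self p.2
  have hy_top : topPos hd (promote p.2 * σ) = y := by
    rw [topPos, ← hτy, Equiv.Perm.inv_eq_iff_eq.mpr rfl]
  have hτx : (promote p.2 * σ) x = p.1 := by
    simp only [Equiv.Perm.mul_apply, hxv]
    exact promote_fix (by omega)
  have hx_adj : adjTop hd (promote p.2 * σ) x := by
    rw [adjTop, hy_top]; exact hcc
  have hmax_other : ∀ z : Fin d, adjTop hd (promote p.2 * σ) z → z ≠ x →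
      (((promote p.2 * σ) z : Fin d) : ℕ) < (p.1 : ℕ) := by
    intro z hz hzx
    rw [adjTop, hy_top] at hz
    have hzy : z ≠ y := by intro hc; rw [hc] at hz; omega
    have hw2 : σ z ≠ p.2 := fun hc => hzy (Equiv.injective σ (by rw [hc, hyv]))
    have hw1 : σ z ≠ p.1 := fun hc => hzx (Equiv.injective σ (by rw [hc, hxv]))
    have hwlt : ((σ z : Fin d) : ℕ) < (p.2 : ℕ) := F2 z hz
    have hwne : ((σ z : Fin d) : ℕ) ≠ (p.1 : ℕ) := fun hc => hw1 (Fin.ext hc)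
    simp only [Equiv.Perm.mul_apply]
    rw [promote_fix (by omega)]
    omega
  have hnbr : nbr hd (promote p.2 * σ) = x := by
    by_contra hc
    have h1 := nbr_max hd (promote p.2 * σ) hx_adj
    have h2 := hmax_other _ (nbr_adj hd (promote p.2 * σ)) hc
    rw [hτx] at h1
    omega
  obtain ⟨hb, hspec⟩ := psi_spec hd (promote p.2 * σ)
  rw [hspec, Prod.ext_iff]
  constructor
  · show (promote p.2 * σ) (nbr hd (promote p.2 * σ)) = p.1
    rw [hnbr]; exact hτx
  · apply Fin.ext
    simp only [Fin.val_mk]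
    rw [hnbr, hτx]
    omega

lemma backward_lemma {d : ℕ} (hd : 2 ≤ d) {p : Fin d × Fin d} (hp : (p.2 : ℕ) = (p.1 : ℕ) + 1)
    {τ : Equiv.Perm (Fin d)} (hτ : IsAlternating τ) (hψ : psi hd τ = p) :
    IsAlternating ((promote p.2)⁻¹ * τ) ∧ ccond p ((promote p.2)⁻¹ * τ) := by
  obtain ⟨hb, hspec⟩ := psi_spec hd τ
  have hpair : p = (τ (nbr hd τ), ⟨(τ (nbr hd τ) : ℕ) + 1, hb⟩) := by rw [← hψ, hspec]
  have hp1 : p.1 = τ (nbr hd τ) := by rw [hpair]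
  have hp1v : (p.1 : ℕ) = ((τ (nbr hd τ) : Fin d) : ℕ) := by rw [hp1]
  obtain ⟨y, hy⟩ : ∃ y, y = topPos hd τ := ⟨_, rfl⟩
  obtain ⟨z, hz⟩ : ∃ z, z = nbr hd τ := ⟨_, rfl⟩
  have hτy : τ y = ⟨d - 1, by omega⟩ := by
    rw [hy, topPos]; exact Equiv.apply_symm_apply τ _
  have hyev : (y : ℕ) % 2 = 0 := by rw [hy]; exact topPos_even hd hτ
  have hzadj : (z : ℕ) + 1 = (y : ℕ) ∨ (y : ℕ) + 1 = (z : ℕ) := by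
    have := nbr_adj hd τ
    rw [adjTop] at this
    rw [hy, hz]; exact this
  have hmaxv : ∀ w : Fin d, ((w : ℕ) + 1 = (y : ℕ) ∨ (y : ℕ) + 1 = (w : ℕ)) →
      ((τ w : Fin d) : ℕ) ≤ (p.1 : ℕ) := by
    intro w hw
    rw [hp1v]
    apply nbr_max
    rw [adjTop, ← hy]
    exact hw
  have hvne : ∀ w : Fin d, w ≠ y → ((τ w : Fin d) : ℕ) ≠ d - 1 := by
    intro w hw
    apply top_val_ne hd τ
    rw [← hy]; exact hw
  have hσtop : ((promote p.2)⁻¹ * τ) y = p.2 := by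
    simp only [Equiv.Perm.mul_apply, hτy]
    exact promote_symm_last (by omega) p.2
  have hσoff : ∀ w : Fin d, w ≠ y → ((w : ℕ) + 1 = (y : ℕ) ∨ (y : ℕ) + 1 = (w : ℕ)) →
      (((promote p.2)⁻¹ * τ) w : ℕ) < (p.2 : ℕ) := by
    intro w hwy hw
    have h1 : ((τ w : Fin d) : ℕ) ≤ (p.1 : ℕ) := hmaxv w hw
    simp only [Equiv.Perm.mul_apply]
    rw [promote_symm_fix (by omega)]
    omega
  constructor
  · intro a b hab
    have habne : a ≠ b := fun h => by rw [h] at hab; omega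
    by_cases ha : a = y
    · have haev : (a : ℕ) % 2 = 0 := by rw [ha]; exact hyev
      refine ⟨fun _ => ?_, fun h => absurd h (by omega)⟩
      have hbne : b ≠ y := by rw [← ha]; exact fun h => habne h.symm
      have hblt := hσoff b hbne (by rw [← ha]; right; omega)
      rw [Fin.lt_def, ha, hσtop]
      exact hblt
    · by_cases hby : b = y
      · have hodd : (a : ℕ) % 2 = 1 := by
          have : (b : ℕ) % 2 = 0 := by rw [hby]; exact hyev
          omega
        refine ⟨fun h => absurd h (by omega), fun _ => ?_⟩
        have halt := hσoff a ha (by rw [← hby]; left; omega)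
        rw [Fin.lt_def, hby, hσtop]
        exact halt
      · have h1 : ((τ a : Fin d) : ℕ) ≠ d - 1 := hvne a ha
        have h2 : ((τ b : Fin d) : ℕ) ≠ d - 1 := hvne b hby
        obtain ⟨m1, m2⟩ := hτ a b hab
        simp only [Equiv.Perm.mul_apply]
        constructor
        · intro hpar
          rw [Fin.lt_def, ← promote_symm_mono h2 h1]
          rw [Fin.lt_def] at m1
          exact m1 hpar
        · intro hpar
          rw [Fin.lt_def, ← promote_symm_mono h1 h2]
          rw [Fin.lt_def] at m2
          exact m2 hpar
  · have hinv : (((promote p.2)⁻¹ * τ)⁻¹ : Equiv.Perm (Fin d)) = τ⁻¹ * promote p.2 := by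
      rw [mul_inv_rev, inv_inv]
    have e1 : ((promote p.2)⁻¹ * τ)⁻¹ p.1 = z := by
      rw [hinv, Equiv.Perm.mul_apply, promote_fix (by omega), hp1, hz,
        Equiv.Perm.inv_eq_iff_eq.mpr rfl]
    have e2 : ((promote p.2)⁻¹ * τ)⁻¹ p.2 = y := by
      rw [hinv, Equiv.Perm.mul_apply]
      have : promote p.2 p.2 = ⟨d - 1, by omega⟩ := Fin.ext (promote_self p.2)
      rw [this, ← hτy, Equiv.Perm.inv_eq_iff_eq.mpr rfl]
    rw [ccond, e1, e2]
    exact hzadj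

lemma CC_eq {d : ℕ} (hd : 2 ≤ d) {p : Fin d × Fin d} (hp : (p.2 : ℕ) = (p.1 : ℕ) + 1) :
    ((altF d).filter fun σ => ccond p σ).card = ((altF d).filter fun τ => psi hd τ = p).card := by
  refine Finset.card_bij' (fun σ _ => promote p.2 * σ) (fun τ _ => (promote p.2)⁻¹ * τ)
    ?hi ?hj ?left ?right
  case hi =>
    intro σ hσ
    simp only [altF, mem_filter, mem_univ, true_and] at hσ ⊢
    obtain ⟨halt, hc⟩ := hσ
    obtain ⟨h1, h2⟩ := forward_lemma hd hp halt hc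
    exact ⟨h1, h2⟩
  case hj =>
    intro τ hτ
    simp only [altF, mem_filter, mem_univ, true_and] at hτ ⊢
    obtain ⟨halt, hc⟩ := hτ
    obtain ⟨h1, h2⟩ := backward_lemma hd hp halt hc
    exact ⟨h1, h2⟩
  case left =>
    intro σ _
    show (promote p.2)⁻¹ * (promote p.2 * σ) = σ
    rw [inv_mul_cancel_left]
  case right =>
    intro τ _
    show promote p.2 * ((promote p.2)⁻¹ * τ) = τ
    rw [mul_inv_cancel_left]

lemma sumC {d : ℕ} (hd : 2 ≤ d) :
    ∑ p ∈ pairF d, ((altF d).filter fun σ => ccond p σ).card = (altF d).card := by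
  have h := Finset.card_eq_sum_card_fiberwise
    (f := psi hd) (s := altF d) (t := pairF d) (fun τ _ => psi_mem_pairF hd τ)
  rw [h]
  apply Finset.sum_congr rfl
  intro p hp
  exact CC_eq hd (mem_filter.mp hp).2

theorem stmt12 (d : ℕ) (hd : 2 ≤ d) :
    2 * ∑ m ∈ Finset.range (d-1), m * sSwap d m = (d - 2) * Alt d := by
  have step1 : ∑ m ∈ Finset.range (d-1), m * sSwap d m = ∑ σ ∈ altF d, swapStat σ := by
    have hmaps : ∀ σ ∈ altF d, swapStat σ ∈ Finset.range (d-1) :=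
      fun σ _ => mem_range.mpr (swapStat_lt hd σ)
    rw [← Finset.sum_fiberwise_of_maps_to hmaps (fun σ => swapStat σ)]
    apply Finset.sum_congr rfl
    intro m _
    rw [sSwap_eq]
    have : ∑ σ ∈ ((altF d).filter fun σ => swapStat σ = m), swapStat σ
        = ∑ σ ∈ ((altF d).filter fun σ => swapStat σ = m), m :=
      Finset.sum_congr rfl (fun σ hσ => (mem_filter.mp hσ).2)
    rw [this, sum_const, smul_eq_mul, mul_comm]
  have step2 : ∑ σ ∈ altF d, swapStat σ
      = ∑ p ∈ pairF d, ((altF d).filter fun σ => acond p σ).card := by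
    calc ∑ σ ∈ altF d, swapStat σ
        = ∑ σ ∈ altF d, ∑ p ∈ pairF d, (if acond p σ then 1 else 0) := by
          apply Finset.sum_congr rfl; intro σ _; rw [swapStat_eq, card_filter]
      _ = ∑ p ∈ pairF d, ∑ σ ∈ altF d, (if acond p σ then 1 else 0) := Finset.sum_comm
      _ = ∑ p ∈ pairF d, ((altF d).filter fun σ => acond p σ).card := by
          apply Finset.sum_congr rfl; intro p _; rw [← card_filter]
  have step3 : ∀ p ∈ pairF d, 2 * ((altF d).filter fun σ => acond p σ).card
      + ((altF d).filter fun σ => ccond p σ).card = (altF d).card := by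
    intro p hp
    have hp2 : (p.2 : ℕ) = (p.1 : ℕ) + 1 := (mem_filter.mp hp).2
    have h1 := tri_eq hp2
    have h2 := AB_eq hp2
    omega
  have step4 : 2 * (∑ p ∈ pairF d, ((altF d).filter fun σ => acond p σ).card)
      + ∑ p ∈ pairF d, ((altF d).filter fun σ => ccond p σ).card
      = (d-1) * (altF d).card := by
    rw [Finset.mul_sum, ← Finset.sum_add_distrib]
    rw [Finset.sum_congr rfl step3, sum_const, smul_eq_mul, pairF_card]
  rw [sumC hd] at step4
  have hd1 : d - 1 = (d - 2) + 1 := by omega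
  rw [hd1, add_mul, one_mul] at step4
  rw [Alt_eq, step1, step2]
  exact Nat.add_right_cancel step4
end

section
/- For every integer d ≥ 1, one has 3 · E(d, 1) = 2^{d+2} − (−1)^d; that is, the number of integer points of the d-dimensional extended Fibonacci polytope is the Jacobsthal number (2^{d+2} − (−1)^d)/3. -/
/-- `ExtFibPts d k` : the number of integer points `x = (x_1, …, x_d)` with
`|x_i| ≤ k` and `|x_i| + |x_{i+1}| ≤ k` for consecutive indices, i.e. the number of
lattice points in the `k`-th dilation of the `d`-dimensional extended Fibonacci polytope. -/
noncomputable def ExtFibPts (d k : ℕ) : ℕ :=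
  Set.ncard {x : Fin d → ℤ | (∀ i, |x i| ≤ (k : ℤ)) ∧
    ∀ i j : Fin d, (j : ℕ) = (i : ℕ) + 1 → |x i| + |x j| ≤ (k : ℤ)}

namespace Stmt14Aux

def P (d : ℕ) (x : Fin d → ℤ) : Prop :=
  (∀ i, |x i| ≤ 1) ∧ ∀ i j : Fin d, (j : ℕ) = (i : ℕ) + 1 → |x i| + |x j| ≤ 1

def S (d : ℕ) : Set (Fin d → ℤ) := {x | P d x}

lemma extFibPts_eq (d : ℕ) : ExtFibPts d 1 = (S d).ncard := by
  simp only [ExtFibPts, S, P, Nat.cast_one]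

lemma S_finite (d : ℕ) : (S d).Finite := by
  apply Set.Finite.subset (Set.Finite.pi (fun i : Fin d => Set.finite_Icc (-1 : ℤ) 1))
  intro x hx
  simp only [Set.mem_pi, Set.mem_univ, forall_true_left, Set.mem_Icc]
  exact fun i => abs_le.mp (hx.1 i)

lemma cons_mem (d : ℕ) (a : ℤ) (y : Fin d → ℤ) :
    Fin.cons a y ∈ S (d + 1) ↔
      |a| ≤ 1 ∧ y ∈ S d ∧ ∀ i : Fin d, (i : ℕ) = 0 → |a| + |y i| ≤ 1 := by
  constructor
  · rintro ⟨h1, h2⟩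
    refine ⟨by simpa using h1 0,
      ⟨fun i => by simpa using h1 i.succ, fun i j hij => ?_⟩, fun i hi => ?_⟩
    · have := h2 i.succ j.succ (by simp [hij])
      simpa using this
    · have := h2 0 i.succ (by simp [hi])
      simpa using this
  · rintro ⟨ha, ⟨hy1, hy2⟩, h0⟩
    refine ⟨fun i => ?_, fun i j hij => ?_⟩
    · cases i using Fin.cases with
      | zero => simpa using ha
      | succ i => simpa using hy1 i
    · cases j using Fin.cases with
      | zero => simp at hij
      | succ j =>
        cases i using Fin.cases with
        | zero =>
          have hj : (j : ℕ) = 0 := by simpa using hij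
          simpa using h0 j hj
        | succ i =>
          have : (j : ℕ) = (i : ℕ) + 1 := by simpa using hij
          simpa using hy2 i j this

lemma eq_cons {d : ℕ} (x : Fin (d + 1) → ℤ) (c : ℤ) (h : x 0 = c) :
    x = Fin.cons c (Fin.tail x) := by
  rw [← h]; exact (Fin.cons_self_tail x).symm

def A (d : ℕ) : Set (Fin (d + 1) → ℤ) := {x ∈ S (d + 1) | x 0 = 0}

def B (d : ℕ) : Set (Fin (d + 1) → ℤ) := {x ∈ S (d + 1) | x 0 ≠ 0}

lemma A_eq_image (d : ℕ) : A d = Fin.cons 0 '' S d := by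
  ext x
  constructor
  · rintro ⟨hx, h0⟩
    refine ⟨Fin.tail x, ?_, ?_⟩
    · have hc : Fin.cons (x 0) (Fin.tail x) = x := Fin.cons_self_tail x
      rw [h0] at hc
      rw [← hc] at hx
      exact ((cons_mem d 0 (Fin.tail x)).mp hx).2.1
    · exact (eq_cons x 0 h0).symm
  · rintro ⟨y, hy, rfl⟩
    refine ⟨(cons_mem d 0 y).mpr ⟨by simp, hy, fun i _ => by simpa using hy.1 i⟩, by simp⟩

lemma ncard_A (d : ℕ) : (A d).ncard = (S d).ncard := by
  rw [A_eq_image, Set.ncard_image_of_injective _ (Fin.cons_right_injective _)]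

lemma B_eq_image (d : ℕ) :
    B (d + 1) = Fin.cons (-1) '' A d ∪ Fin.cons 1 '' A d := by
  ext x
  constructor
  · rintro ⟨hx, h0⟩
    have hc : Fin.cons (x 0) (Fin.tail x) = x := Fin.cons_self_tail x
    rw [← hc] at hx
    obtain ⟨ha, hy, hpair⟩ := (cons_mem (d + 1) (x 0) (Fin.tail x)).mp hx
    have habs : x 0 = -1 ∨ x 0 = 1 := by
      have := abs_le.mp ha
      omega
    have htz : Fin.tail x 0 = 0 := by
      have h := hpair 0 rfl
      have : |x 0| = 1 := by rcases habs with h' | h' <;> simp [h']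
      rw [this] at h
      have : |Fin.tail x 0| ≤ 0 := by linarith
      simpa using abs_nonpos_iff.mp this
    have hyA : Fin.tail x ∈ A d := ⟨hy, htz⟩
    rcases habs with h' | h'
    · left; exact ⟨Fin.tail x, hyA, (eq_cons x _ h').symm⟩
    · right; exact ⟨Fin.tail x, hyA, (eq_cons x _ h').symm⟩
  · rintro (⟨y, ⟨hy, hy0⟩, rfl⟩ | ⟨y, ⟨hy, hy0⟩, rfl⟩) <;>
    · refine ⟨(cons_mem (d + 1) _ y).mpr ⟨by simp, hy, fun i hi => ?_⟩, by simp⟩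
      have : i = 0 := by
        ext; simpa using hi
      rw [this, hy0]
      simp

lemma S_split (d : ℕ) : (S (d + 1)).ncard = (A d).ncard + (B d).ncard := by
  have hu : S (d + 1) = A d ∪ B d := by
    ext x
    simp only [A, B, Set.mem_union, Set.mem_setOf_eq, Set.mem_sep_iff]
    tauto
  have hdisj : Disjoint (A d) (B d) := by
    rw [Set.disjoint_left]
    rintro x ⟨_, h0⟩ ⟨_, h0'⟩
    exact h0' h0
  rw [hu, Set.ncard_union_eq hdisj ((S_finite (d + 1)).subset (fun x hx => hx.1))
    ((S_finite (d + 1)).subset (fun x hx => hx.1))]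

lemma ncard_B (d : ℕ) : (B (d + 1)).ncard = 2 * (S d).ncard := by
  have hA : (A d).Finite := (S_finite (d + 1)).subset (fun x hx => hx.1)
  have h1 : (Fin.cons (-1) '' A d : Set (Fin (d + 2) → ℤ)).ncard = (S d).ncard := by
    rw [Set.ncard_image_of_injective _ (Fin.cons_right_injective _), ncard_A]
  have h2 : (Fin.cons 1 '' A d : Set (Fin (d + 2) → ℤ)).ncard = (S d).ncard := by
    rw [Set.ncard_image_of_injective _ (Fin.cons_right_injective _), ncard_A]
  have hdisj : Disjoint (Fin.cons (-1) '' A d : Set (Fin (d + 2) → ℤ)) (Fin.cons 1 '' A d) := by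
    rw [Set.disjoint_left]
    rintro x ⟨y, _, rfl⟩ ⟨z, _, hz⟩
    have h := congrFun hz 0
    simp at h
  rw [B_eq_image, Set.ncard_union_eq hdisj (hA.image _) (hA.image _), h1, h2]
  ring

lemma rec_formula (d : ℕ) :
    ExtFibPts (d + 2) 1 = ExtFibPts (d + 1) 1 + 2 * ExtFibPts d 1 := by
  rw [extFibPts_eq, extFibPts_eq, extFibPts_eq, S_split (d + 1), ncard_A, ncard_B]

lemma S_zero : ExtFibPts 0 1 = 1 := by
  rw [extFibPts_eq]
  have : S 0 = Set.univ := by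
    ext x
    simp [S, P]
  rw [this, Set.ncard_univ]
  exact Nat.card_unique

lemma S_one : ExtFibPts 1 1 = 3 := by
  rw [extFibPts_eq]
  have hinj : Function.Injective (fun x : Fin 1 → ℤ => x 0) := by
    intro x y h
    funext i
    have : i = 0 := Subsingleton.elim _ _
    rw [this]; exact h
  have himg : (fun x : Fin 1 → ℤ => x 0) '' S 1 = Set.Icc (-1 : ℤ) 1 := by
    ext c
    constructor
    · rintro ⟨x, hx, rfl⟩
      exact Set.mem_Icc.mpr (abs_le.mp (hx.1 0))
    · intro hc
      refine ⟨fun _ => c, ⟨fun i => abs_le.mpr (Set.mem_Icc.mp hc), fun i j hij => ?_⟩, rfl⟩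
      · exact absurd hij (by omega)
  rw [← Set.ncard_image_of_injective _ hinj, himg, ← Finset.coe_Icc, Set.ncard_coe_finset]
  decide

end Stmt14Aux

theorem stmt14 (d : ℕ) (hd : 1 ≤ d) :
    (3 * ExtFibPts d 1 : ℤ) = 2^(d+2) - (-1)^d := by
  clear hd
  induction d using Nat.twoStepInduction with
  | zero => simp [Stmt14Aux.S_zero]
  | one => norm_num [Stmt14Aux.S_one]
  | more d ih1 ih2 =>
    have e : (ExtFibPts (d + 2) 1 : ℤ) = ExtFibPts (d + 1) 1 + 2 * ExtFibPts d 1 := by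
      exact_mod_cast congrArg (Nat.cast : ℕ → ℤ) (Stmt14Aux.rec_formula d)
    linear_combination 3 * e + ih2 + 2 * ih1
end

section
/- Let n ≥ 1 and 0 ≤ k ≤ n−1 be integers. For a subset S ⊆ {1,…,n−1}, let R(S) = {x ∈ [0,1]^n : x_i + x_{i+1} > 1 for all i ∈ S, and x_i + x_{i+1} < 1 for all i ∈ {1,…,n−1} \ S}. Then Σ_{S ⊆ {1,…,n−1}, |S| = k} vol(R(S)) = A(n,k)/n!, where vol denotes Lebesgue measure on ℝ^n. -/
/-- `altDescents π` : the number of alternating descents of the permutation `π` of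
`{1, …, n}`, i.e. the number of indices `i ∈ {1, …, n−1}` such that either `i` is odd and
`π(i) > π(i+1)`, or `i` is even and `π(i) < π(i+1)`.  In 0-based indexing, a 1-based odd
index corresponds to an even index. -/
noncomputable def altDescents {n : ℕ} (π : Equiv.Perm (Fin n)) : ℕ :=
  Nat.card {p : Fin n × Fin n // (p.2 : ℕ) = (p.1 : ℕ) + 1 ∧
    (((p.1 : ℕ) % 2 = 0 ∧ π p.2 < π p.1) ∨ ((p.1 : ℕ) % 2 = 1 ∧ π p.1 < π p.2))}

/-- `A n k` : the number of permutations of `{1, …, n}` with exactly `k` alternating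
descents. -/
noncomputable def altDescentCount (n k : ℕ) : ℕ :=
  Nat.card {π : Equiv.Perm (Fin n) // altDescents π = k}

/-- The region `R(S) ⊆ [0,1]^n` determined by a set `S ⊆ {1, …, n−1}` of 1-based indices:
for `i ∈ S` we require `x_i + x_{i+1} > 1` and for `i ∉ S` we require `x_i + x_{i+1} < 1`.
In 0-based indexing the pair `(i, j)` with `j = i + 1` corresponds to the 1-based index
`i + 1`. -/
def Rregion (n : ℕ) (S : Finset ℕ) : Set (Fin n → ℝ) :=
  {x | (∀ i, 0 ≤ x i ∧ x i ≤ 1) ∧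
    ∀ i j : Fin n, (j : ℕ) = (i : ℕ) + 1 →
      (((i : ℕ) + 1 ∈ S → 1 < x i + x j) ∧ ((i : ℕ) + 1 ∉ S → x i + x j < 1))}

namespace AltDescAux

open MeasureTheory Set

variable {n : ℕ}

/-- The alternating-descent condition on a consecutive pair. -/
def acond (π : Equiv.Perm (Fin n)) (p : Fin n × Fin n) : Prop :=
  (p.2 : ℕ) = (p.1 : ℕ) + 1 ∧
    (((p.1 : ℕ) % 2 = 0 ∧ π p.2 < π p.1) ∨ ((p.1 : ℕ) % 2 = 1 ∧ π p.1 < π p.2))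

instance (π : Equiv.Perm (Fin n)) : DecidablePred (acond π) := fun p => by
  unfold acond; infer_instance

/-- The set of (1-based) alternating descent positions of `π`. -/
noncomputable def dset (n : ℕ) (π : Equiv.Perm (Fin n)) : Finset ℕ :=
  (Finset.Icc 1 (n - 1)).filter
    (fun m => ∃ p : Fin n × Fin n, acond π p ∧ m = (p.1 : ℕ) + 1)

lemma dset_subset (π : Equiv.Perm (Fin n)) : dset n π ⊆ Finset.Icc 1 (n - 1) :=
  Finset.filter_subset _ _

lemma mem_dset {π : Equiv.Perm (Fin n)} {m : ℕ} :
    m ∈ dset n π ↔ ∃ p : Fin n × Fin n, acond π p ∧ m = (p.1 : ℕ) + 1 := by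
  classical
  constructor
  · intro h
    exact (Finset.mem_filter.mp h).2
  · rintro ⟨p, hp, rfl⟩
    refine Finset.mem_filter.mpr ⟨Finset.mem_Icc.mpr ⟨by omega, ?_⟩, ⟨p, hp, rfl⟩⟩
    have h2 := p.2.isLt
    have h1 := hp.1
    omega

lemma mem_dset_pair (π : Equiv.Perm (Fin n)) {i j : Fin n} (hj : (j : ℕ) = (i : ℕ) + 1) :
    ((i : ℕ) + 1 ∈ dset n π) ↔
      (((i : ℕ) % 2 = 0 ∧ π j < π i) ∨ ((i : ℕ) % 2 = 1 ∧ π i < π j)) := by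
  rw [mem_dset]
  constructor
  · rintro ⟨p, ⟨hp1, hp2⟩, hm⟩
    have h1 : p.1 = i := Fin.ext (by omega)
    have h2 : p.2 = j := Fin.ext (by omega)
    rw [h1, h2] at hp2
    exact hp2
  · intro h
    exact ⟨(i, j), ⟨hj, h⟩, rfl⟩

lemma altDescents_eq_card (π : Equiv.Perm (Fin n)) : altDescents π = (dset n π).card := by
  classical
  have h1 : altDescents π = (Finset.univ.filter (acond π)).card := by
    rw [show altDescents π = Nat.card {p : Fin n × Fin n // acond π p} from rfl,
      Nat.card_eq_fintype_card, Fintype.card_subtype]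
  rw [h1]
  refine Finset.card_bij (fun p _ => (p.1 : ℕ) + 1) ?_ ?_ ?_
  · intro p hp
    exact mem_dset.mpr ⟨p, (Finset.mem_filter.mp hp).2, rfl⟩
  · intro p hp q hq h
    have h' : (p.1 : ℕ) + 1 = (q.1 : ℕ) + 1 := h
    have hp' := (Finset.mem_filter.mp hp).2.1
    have hq' := (Finset.mem_filter.mp hq).2.1
    have : p.1 = q.1 := Fin.ext (by omega)
    have h2 : p.2 = q.2 := Fin.ext (by omega)
    exact Prod.ext this h2
  · intro m hm
    obtain ⟨p, hp, rfl⟩ := mem_dset.mp hm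
    exact ⟨p, Finset.mem_filter.mpr ⟨Finset.mem_univ _, hp⟩, rfl⟩

/-! ### Geometric regions -/

/-- The unit cube. -/
def cube (n : ℕ) : Set (Fin n → ℝ) := {y | ∀ i, 0 ≤ y i ∧ y i ≤ 1}

/-- The (open) simplex of points ordered according to `σ`. -/
def simp' (n : ℕ) (σ : Equiv.Perm (Fin n)) : Set (Fin n → ℝ) :=
  cube n ∩ {y | ∀ a b : Fin n, σ a < σ b → y a < y b}

/-- The image of `Rregion n S` under the coordinatewise flip on odd (0-based) coordinates. -/
def Qreg (n : ℕ) (S : Finset ℕ) : Set (Fin n → ℝ) :=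
  cube n ∩ {y | ∀ i j : Fin n, (j : ℕ) = (i : ℕ) + 1 →
    (((i : ℕ) + 1 ∈ S → (if (i : ℕ) % 2 = 0 then y j < y i else y i < y j)) ∧
     ((i : ℕ) + 1 ∉ S → (if (i : ℕ) % 2 = 0 then y i < y j else y j < y i)))}

lemma measurableSet_cube : MeasurableSet (cube n) := by
  have : cube n = ⋂ i, ((fun y : Fin n → ℝ => y i) ⁻¹' Icc 0 1) := by
    ext y
    simp only [cube, Set.mem_iInter, Set.mem_preimage, Set.mem_Icc, Set.mem_setOf_eq]
  rw [this]
  exact MeasurableSet.iInter fun i => (measurable_pi_apply i) measurableSet_Icc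

lemma measurableSet_lt' (a b : Fin n) : MeasurableSet {y : Fin n → ℝ | y a < y b} :=
  measurableSet_lt (measurable_pi_apply a) (measurable_pi_apply b)

lemma measurableSet_simp' (σ : Equiv.Perm (Fin n)) : MeasurableSet (simp' n σ) := by
  refine measurableSet_cube.inter ?_
  have : {y : Fin n → ℝ | ∀ a b : Fin n, σ a < σ b → y a < y b} =
      ⋂ (a : Fin n), ⋂ (b : Fin n), {y | σ a < σ b → y a < y b} := by
    ext y; simp only [Set.mem_iInter, Set.mem_setOf_eq]
  rw [this]
  refine MeasurableSet.iInter fun a => MeasurableSet.iInter fun b => ?_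
  by_cases h : σ a < σ b
  · simp only [h, true_implies]
    exact measurableSet_lt' a b
  · simp [h]

lemma measurableSet_Q (S : Finset ℕ) : MeasurableSet (Qreg n S) := by
  classical
  refine measurableSet_cube.inter ?_
  have : {y : Fin n → ℝ | ∀ i j : Fin n, (j : ℕ) = (i : ℕ) + 1 →
      (((i : ℕ) + 1 ∈ S → (if (i : ℕ) % 2 = 0 then y j < y i else y i < y j)) ∧
       ((i : ℕ) + 1 ∉ S → (if (i : ℕ) % 2 = 0 then y i < y j else y j < y i)))} =
      ⋂ (i : Fin n), ⋂ (j : Fin n), {y | (j : ℕ) = (i : ℕ) + 1 →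
      (((i : ℕ) + 1 ∈ S → (if (i : ℕ) % 2 = 0 then y j < y i else y i < y j)) ∧
       ((i : ℕ) + 1 ∉ S → (if (i : ℕ) % 2 = 0 then y i < y j else y j < y i)))} := by
    ext y; simp only [Set.mem_iInter, Set.mem_setOf_eq]
  rw [this]
  refine MeasurableSet.iInter fun i => MeasurableSet.iInter fun j => ?_
  by_cases hj : (j : ℕ) = (i : ℕ) + 1
  · simp only [hj, forall_true_left]
    rw [Set.setOf_and]
    refine MeasurableSet.inter ?_ ?_ <;>
    · by_cases hm : (i : ℕ) + 1 ∈ S <;> by_cases hp : (i : ℕ) % 2 = 0 <;>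
        simp only [hm, hp, if_true, if_false, true_implies, false_implies, not_true_eq_false,
          not_false_eq_true] <;>
      first
        | exact measurableSet_lt' _ _
        | simp
  · simp [hj]

lemma volume_cube : volume (cube n) = 1 := by
  have : cube n = Set.pi Set.univ (fun _ : Fin n => Icc (0 : ℝ) 1) := by
    ext y
    simp only [cube, Set.mem_setOf_eq, Set.mem_univ_pi, Set.mem_Icc]
  rw [this, volume_pi_pi]
  simp

/-- The "diagonal" null set where two coordinates agree. -/
def diag (n : ℕ) : Set (Fin n → ℝ) :=
  ⋃ (i : Fin n) (j : Fin n) (_ : j ≠ i), {y | y j = y i}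

lemma hyperplane_null (i j : Fin n) (hij : ¬ j = i) :
    volume {y : Fin n → ℝ | y j = y i} = 0 := by
  classical
  have hmp := MeasureTheory.volume_preserving_piEquivPiSubtypeProd
    (fun _ : Fin n => ℝ) (fun x => x = i)
  set S' : Set ((∀ _ : {x : Fin n // x = i}, ℝ) × (∀ _ : {x : Fin n // ¬ x = i}, ℝ)) :=
    {q | q.2 ⟨j, hij⟩ = q.1 ⟨i, rfl⟩} with hS'def
  have hS' : MeasurableSet S' := by
    apply measurableSet_eq_fun
    · exact (measurable_pi_apply _).comp measurable_snd
    · exact (measurable_pi_apply _).comp measurable_fst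
  have hpre : (MeasurableEquiv.piEquivPiSubtypeProd (fun _ : Fin n => ℝ) (fun x => x = i)) ⁻¹' S'
      = {y : Fin n → ℝ | y j = y i} := rfl
  rw [← hpre, hmp.measure_preimage hS'.nullMeasurableSet]
  rw [MeasureTheory.Measure.volume_eq_prod, Measure.prod_apply hS']
  have hzero : ∀ a : (∀ _ : {x : Fin n // x = i}, ℝ),
      (volume : Measure (∀ _ : {x : Fin n // ¬ x = i}, ℝ)) (Prod.mk a ⁻¹' S') = 0 := by
    intro a
    have : Prod.mk a ⁻¹' S' = {b : ∀ _ : {x : Fin n // ¬ x = i}, ℝ | b ⟨j, hij⟩ = a ⟨i, rfl⟩} :=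
      rfl
    rw [this, MeasureTheory.volume_pi, MeasureTheory.Measure.pi_hyperplane]
  simp only [hzero]
  simp

lemma diag_null : volume (diag n) = 0 :=
  measure_iUnion_null fun i => measure_iUnion_null fun j => measure_iUnion_null fun hij =>
    hyperplane_null i j hij

lemma lt_iff_of_mem_simp' {σ : Equiv.Perm (Fin n)} {y : Fin n → ℝ} (hy : y ∈ simp' n σ)
    (a b : Fin n) : y a < y b ↔ σ a < σ b := by
  constructor
  · intro h
    rcases lt_trichotomy (σ a) (σ b) with h1 | h1 | h1
    · exact h1
    · exact absurd h (by rw [σ.injective (h1)]; exact lt_irrefl _)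
    · exact absurd (hy.2 b a h1) (lt_asymm h)
  · exact hy.2 a b

lemma simp'_eq_of_mem {σ τ : Equiv.Perm (Fin n)} {y : Fin n → ℝ}
    (h1 : y ∈ simp' n σ) (h2 : y ∈ simp' n τ) : σ = τ := by
  have key : ∀ a b, σ a < σ b → τ a < τ b := by
    intro a b h
    exact ((lt_iff_of_mem_simp' h2 a b)).mp ((lt_iff_of_mem_simp' h1 a b).mpr h)
  have hg : StrictMono (fun u => τ (σ.symm u)) := by
    intro u v huv
    apply key
    rwa [σ.apply_symm_apply, σ.apply_symm_apply]
  have hrange : Set.range (fun u => τ (σ.symm u)) = Set.range (id : Fin n → Fin n) := by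
    rw [Set.range_id]
    exact (σ.symm.trans τ).surjective.range_eq
  haveI : WellFoundedLT (Fin n) := inferInstance
  have hid : (fun u => τ (σ.symm u)) = id := (hg.range_inj strictMono_id).mp hrange
  apply Equiv.ext
  intro a
  have h3 := congrFun hid (σ a)
  simp only [Equiv.symm_apply_apply, id_eq] at h3
  exact h3.symm

lemma pairwise_disjoint_simp' :
    Pairwise (Function.onFun Disjoint (fun σ : Equiv.Perm (Fin n) => simp' n σ)) := by
  intro σ τ hne
  rw [Function.onFun, Set.disjoint_left]
  intro y hyσ hyτ
  exact hne (simp'_eq_of_mem hyσ hyτ)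

lemma exists_simp' {y : Fin n → ℝ} (hy : y ∈ cube n) (hinj : Function.Injective y) :
    ∃ σ, y ∈ simp' n σ := by
  have hmono : StrictMono (y ∘ Tuple.sort y) :=
    (Tuple.monotone_sort y).strictMono_of_injective (hinj.comp (Tuple.sort y).injective)
  refine ⟨(Tuple.sort y)⁻¹, hy, fun a b hab => ?_⟩
  have := hmono hab
  simpa using this

lemma cube_subset_union :
    cube n \ diag n ⊆ ⋃ σ : Equiv.Perm (Fin n), simp' n σ := by
  intro y hy
  have hinj : Function.Injective y := by
    intro a b hab
    by_contra hne
    exact hy.2 (Set.mem_iUnion.mpr ⟨b, Set.mem_iUnion.mpr ⟨a,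
      Set.mem_iUnion.mpr ⟨hne, hab⟩⟩⟩)
  obtain ⟨σ, hσ⟩ := exists_simp' hy.1 hinj
  exact Set.mem_iUnion.mpr ⟨σ, hσ⟩

/-- Coordinate permutation invariance. -/
lemma volume_simp'_mul (σ ρ : Equiv.Perm (Fin n)) :
    volume (simp' n (σ * ρ)) = volume (simp' n σ) := by
  have hmp := MeasureTheory.volume_measurePreserving_piCongrLeft (fun _ : Fin n => ℝ) ρ
  have happ : ∀ (y : Fin n → ℝ) (i : Fin n),
      (MeasurableEquiv.piCongrLeft (fun _ : Fin n => ℝ) ρ) y i = y (ρ.symm i) := by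
    intro y i
    conv_lhs => rw [← ρ.apply_symm_apply i]
    exact Equiv.piCongrLeft_apply_apply (fun _ : Fin n => ℝ) ρ y (ρ.symm i)
  have hpre : (MeasurableEquiv.piCongrLeft (fun _ : Fin n => ℝ) ρ) ⁻¹' simp' n σ
      = simp' n (σ * ρ) := by
    ext y
    simp only [Set.mem_preimage, simp', cube, Set.mem_inter_iff, Set.mem_setOf_eq, happ]
    constructor
    · rintro ⟨h1, h2⟩
      refine ⟨fun i => by simpa using h1 (ρ i), fun a b hab => ?_⟩
      have := h2 (ρ a) (ρ b) (by simpa using hab)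
      simpa using this
    · rintro ⟨h1, h2⟩
      refine ⟨fun i => h1 (ρ.symm i), fun a b hab => ?_⟩
      have : σ (ρ (ρ.symm a)) < σ (ρ (ρ.symm b)) := by simpa using hab
      exact h2 (ρ.symm a) (ρ.symm b) (by simpa using this)
  rw [← hpre, hmp.measure_preimage (measurableSet_simp' σ).nullMeasurableSet]

lemma volume_simp'_const (σ : Equiv.Perm (Fin n)) :
    volume (simp' n σ) = volume (simp' n 1) := by
  have := volume_simp'_mul (1 : Equiv.Perm (Fin n)) σ
  rwa [one_mul] at this

lemma volume_simp' (σ : Equiv.Perm (Fin n)) :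
    volume (simp' n σ) = ((Nat.factorial n : ENNReal))⁻¹ := by
  classical
  set U : Set (Fin n → ℝ) := ⋃ τ : Equiv.Perm (Fin n), simp' n τ with hU
  have hUvol : volume U = (Nat.factorial n : ENNReal) * volume (simp' n 1) := by
    rw [hU, measure_iUnion pairwise_disjoint_simp' (fun τ => measurableSet_simp' τ),
      tsum_fintype]
    rw [Finset.sum_congr rfl (fun τ _ => volume_simp'_const τ), Finset.sum_const,
      Finset.card_univ, Fintype.card_perm, Fintype.card_fin, nsmul_eq_mul]
  have hU1 : volume U = 1 := by
    apply le_antisymm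
    · calc volume U ≤ volume (cube n) := by
            apply measure_mono
            rw [hU]
            exact Set.iUnion_subset fun τ => Set.inter_subset_left
        _ = 1 := volume_cube
    · calc (1 : ENNReal) = volume (cube n) := volume_cube.symm
        _ ≤ volume (U ∪ diag n) := by
            apply measure_mono
            intro y hy
            by_cases hd : y ∈ diag n
            · exact Or.inr hd
            · exact Or.inl (cube_subset_union ⟨hy, hd⟩)
        _ ≤ volume U + volume (diag n) := measure_union_le _ _
        _ = volume U := by rw [diag_null, add_zero]
  have hne : ((Nat.factorial n : ENNReal)) ≠ 0 := by
    exact_mod_cast Nat.cast_ne_zero.mpr (Nat.factorial_ne_zero n)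
  have htop : ((Nat.factorial n : ENNReal)) ≠ ⊤ := ENNReal.natCast_ne_top _
  have h1 : (Nat.factorial n : ENNReal) * volume (simp' n 1) = 1 := by
    rw [← hUvol, hU1]
  rw [volume_simp'_const σ]
  calc volume (simp' n 1)
      = (Nat.factorial n : ENNReal)⁻¹ * ((Nat.factorial n : ENNReal) * volume (simp' n 1)) := by
        rw [← mul_assoc, ENNReal.inv_mul_cancel hne htop, one_mul]
    _ = (Nat.factorial n : ENNReal)⁻¹ := by rw [h1, mul_one]

lemma simp'_subset_Q {σ : Equiv.Perm (Fin n)} {S : Finset ℕ}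
    (h : dset n σ = S) : simp' n σ ⊆ Qreg n S := by
  intro y hy
  refine ⟨hy.1, fun i j hj => ?_⟩
  have hij : i ≠ j := by
    intro hij'
    rw [hij'] at hj; omega
  have hmem : ((i : ℕ) + 1 ∈ S) ↔
      (((i : ℕ) % 2 = 0 ∧ σ j < σ i) ∨ ((i : ℕ) % 2 = 1 ∧ σ i < σ j)) := by
    rw [← h]; exact mem_dset_pair σ hj
  rcases Nat.mod_two_eq_zero_or_one (i : ℕ) with hp | hp
  · simp only [hp, if_true]
    constructor
    · intro hm
      rcases hmem.mp hm with ⟨_, hlt⟩ | ⟨h1, _⟩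
      · exact (lt_iff_of_mem_simp' hy j i).mpr hlt
      · omega
    · intro hm
      have hne : σ i ≠ σ j := fun hc => hij (σ.injective hc)
      have : ¬ σ j < σ i := fun hc => hm (hmem.mpr (Or.inl ⟨hp, hc⟩))
      have : σ i < σ j := by
        rcases lt_trichotomy (σ i) (σ j) with h' | h' | h'
        · exact h'
        · exact absurd h' hne
        · exact absurd h' this
      exact (lt_iff_of_mem_simp' hy i j).mpr this
  · simp only [hp, if_neg (by omega : ¬ ((1 : ℕ) = 0))]
    constructor
    · intro hm
      rcases hmem.mp hm with ⟨h1, _⟩ | ⟨_, hlt⟩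
      · omega
      · exact (lt_iff_of_mem_simp' hy i j).mpr hlt
    · intro hm
      have hne : σ j ≠ σ i := fun hc => hij (σ.injective hc.symm)
      have hnotlt : ¬ σ i < σ j := fun hc => hm (hmem.mpr (Or.inr ⟨hp, hc⟩))
      have : σ j < σ i := by
        rcases lt_trichotomy (σ j) (σ i) with h' | h' | h'
        · exact h'
        · exact absurd h' hne
        · exact absurd h' hnotlt
      exact (lt_iff_of_mem_simp' hy j i).mpr this

lemma dset_eq_of_mem_Q {σ : Equiv.Perm (Fin n)} {S : Finset ℕ}
    (hS : S ⊆ Finset.Icc 1 (n - 1)) {y : Fin n → ℝ}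
    (hy : y ∈ simp' n σ) (hyQ : y ∈ Qreg n S) : dset n σ = S := by
  ext m
  by_cases hm : m ∈ Finset.Icc 1 (n - 1)
  · have hIcc := Finset.mem_Icc.mp hm
    have hn1 : 1 ≤ n := by omega
    have hmn : m < n := by omega
    have hm1n : m - 1 < n := by omega
    set i : Fin n := ⟨m - 1, hm1n⟩ with hi
    set j : Fin n := ⟨m, hmn⟩ with hjd
    have hj : (j : ℕ) = (i : ℕ) + 1 := by simp [hi, hjd]; omega
    have hmi : m = (i : ℕ) + 1 := by simp [hi]; omega
    have hQ := hyQ.2 i j hj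
    rw [hmi, mem_dset_pair σ hj]
    have hij : i ≠ j := by
      intro hij'
      rw [hij'] at hj; omega
    have hne : σ i ≠ σ j := fun hc => hij (σ.injective hc)
    rcases Nat.mod_two_eq_zero_or_one (i : ℕ) with hp | hp
    · simp only [hp, if_true] at hQ
      constructor
      · rintro (⟨_, hlt⟩ | ⟨h1, _⟩)
        · by_contra hmS
          have := hQ.2 hmS
          exact absurd ((lt_iff_of_mem_simp' hy j i).mpr hlt) (lt_asymm this)
        · omega
      · intro hmS
        exact Or.inl ⟨hp, (lt_iff_of_mem_simp' hy j i).mp (hQ.1 hmS)⟩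
    · simp only [hp, if_neg (by omega : ¬ ((1 : ℕ) = 0))] at hQ
      constructor
      · rintro (⟨h1, _⟩ | ⟨_, hlt⟩)
        · omega
        · by_contra hmS
          have := hQ.2 hmS
          exact absurd ((lt_iff_of_mem_simp' hy i j).mpr hlt) (lt_asymm this)
      · intro hmS
        exact Or.inr ⟨hp, (lt_iff_of_mem_simp' hy i j).mp (hQ.1 hmS)⟩
  · constructor
    · intro h; exact absurd (dset_subset σ h) hm
    · intro h; exact absurd (hS h) hm

lemma volume_Q {S : Finset ℕ} (hS : S ⊆ Finset.Icc 1 (n - 1)) :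
    volume (Qreg n S) =
      ((Finset.univ.filter fun σ : Equiv.Perm (Fin n) => dset n σ = S).card : ENNReal) *
        ((Nat.factorial n : ENNReal))⁻¹ := by
  classical
  set U : Set (Fin n → ℝ) := ⋃ τ : Equiv.Perm (Fin n), simp' n τ with hU
  have hQU : volume (Qreg n S) = volume (Qreg n S ∩ U) := by
    apply le_antisymm
    · calc volume (Qreg n S) ≤ volume (Qreg n S ∩ U) + volume (Qreg n S \ U) := by
            rw [← measure_inter_add_diff _ (by
              exact MeasurableSet.iUnion fun τ => measurableSet_simp' τ)]
      _ = volume (Qreg n S ∩ U) := by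
            have h0 : volume (Qreg n S \ U) = 0 := by
              refine measure_mono_null ?_ diag_null
              intro y hy
              by_contra hd
              exact hy.2 (cube_subset_union ⟨hy.1.1, hd⟩)
            rw [h0, add_zero]
    · exact measure_mono Set.inter_subset_left
  have hsplit : Qreg n S ∩ U = ⋃ τ : Equiv.Perm (Fin n), (simp' n τ ∩ Qreg n S) := by
    rw [hU, Set.inter_comm, Set.iUnion_inter]
  have hterm : ∀ τ : Equiv.Perm (Fin n),
      volume (simp' n τ ∩ Qreg n S) =
        if dset n τ = S then ((Nat.factorial n : ENNReal))⁻¹ else 0 := by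
    intro τ
    by_cases h : dset n τ = S
    · rw [if_pos h, Set.inter_eq_left.mpr (simp'_subset_Q h), volume_simp']
    · rw [if_neg h]
      have : simp' n τ ∩ Qreg n S = ∅ := by
        rw [Set.eq_empty_iff_forall_notMem]
        rintro y ⟨h1, h2⟩
        exact h (dset_eq_of_mem_Q hS h1 h2)
      rw [this, measure_empty]
  rw [hQU, hsplit, measure_iUnion ?_ ?_]
  · rw [tsum_fintype, Finset.sum_congr rfl (fun τ _ => hterm τ), Finset.sum_ite, Finset.sum_const,
      Finset.sum_const, smul_zero, add_zero, nsmul_eq_mul]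
  · intro σ τ hne
    exact Set.disjoint_left.mpr fun y hy1 hy2 =>
      (Set.disjoint_left.mp (pairwise_disjoint_simp' hne)) hy1.1 hy2.1
  · exact fun τ => (measurableSet_simp' τ).inter (measurableSet_Q S)

lemma volume_R (S : Finset ℕ) : volume (Rregion n S) = volume (Qreg n S) := by
  classical
  have hf : ∀ i : Fin n,
      MeasurePreserving (fun t : ℝ => if (i : ℕ) % 2 = 0 then t else 1 - t) volume volume := by
    intro i
    by_cases h : (i : ℕ) % 2 = 0
    · simp only [h, eq_self_iff_true, if_true]; exact MeasurePreserving.id (volume : Measure ℝ)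
    · simpa [h] using Measure.measurePreserving_sub_left (volume : Measure ℝ) 1
  have hT : MeasurePreserving
      (fun (x : Fin n → ℝ) (i : Fin n) => if (i : ℕ) % 2 = 0 then x i else 1 - x i)
      volume volume := volume_preserving_pi hf
  have hpre : (fun (x : Fin n → ℝ) (i : Fin n) => if (i : ℕ) % 2 = 0 then x i else 1 - x i) ⁻¹'
      Qreg n S = Rregion n S := by
    ext x
    simp only [Set.mem_preimage, Qreg, cube, Rregion, Set.mem_inter_iff, Set.mem_setOf_eq]
    constructor
    · rintro ⟨h1, h2⟩
      constructor
      · intro i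
        have := h1 i
        by_cases h : (i : ℕ) % 2 = 0 <;> simp only [h, if_true, if_false] at this <;>
          constructor <;> linarith [this.1, this.2]
      · intro i j hj
        have hQ := h2 i j hj
        rcases Nat.mod_two_eq_zero_or_one (i : ℕ) with hp | hp
        · have hjp : ¬ ((j : ℕ) % 2 = 0) := by omega
          simp only [hp, hjp, if_true, if_false, if_pos rfl] at hQ
          constructor
          · intro hm; have := hQ.1 hm; linarith
          · intro hm; have := hQ.2 hm; linarith
        · have hp' : ¬ ((i : ℕ) % 2 = 0) := by omega
          have hjp : (j : ℕ) % 2 = 0 := by omega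
          simp only [hp', hjp, if_true, if_false] at hQ
          constructor
          · intro hm; have := hQ.1 hm; linarith
          · intro hm; have := hQ.2 hm; linarith
    · rintro ⟨h1, h2⟩
      constructor
      · intro i
        have := h1 i
        by_cases h : (i : ℕ) % 2 = 0 <;> simp only [h, if_true, if_false] <;>
          constructor <;> linarith [this.1, this.2]
      · intro i j hj
        have hR := h2 i j hj
        rcases Nat.mod_two_eq_zero_or_one (i : ℕ) with hp | hp
        · have hjp : ¬ ((j : ℕ) % 2 = 0) := by omega
          simp only [hp, hjp, if_true, if_false, if_pos rfl]
          constructor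
          · intro hm; have := hR.1 hm; linarith
          · intro hm; have := hR.2 hm; linarith
        · have hp' : ¬ ((i : ℕ) % 2 = 0) := by omega
          have hjp : (j : ℕ) % 2 = 0 := by omega
          simp only [hp', hjp, if_true, if_false]
          constructor
          · intro hm; have := hR.1 hm; linarith
          · intro hm; have := hR.2 hm; linarith
  rw [← hpre, hT.measure_preimage (measurableSet_Q S).nullMeasurableSet]

end AltDescAux

theorem stmt16 (n k : ℕ) (hn : 1 ≤ n) (hk : k ≤ n - 1) :
    ∑ S ∈ Finset.powersetCard k (Finset.Icc 1 (n-1)), MeasureTheory.volume (Rregion n S)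
      = (altDescentCount n k : ENNReal) / (Nat.factorial n : ENNReal) := by
  classical
  open AltDescAux MeasureTheory in
  have hcount : altDescentCount n k =
      (Finset.univ.filter fun σ : Equiv.Perm (Fin n) => (dset n σ).card = k).card := by
    rw [show altDescentCount n k = Nat.card {π : Equiv.Perm (Fin n) // altDescents π = k}
        from rfl, Nat.card_eq_fintype_card, Fintype.card_subtype]
    congr 1
    apply Finset.filter_congr
    intro σ _
    rw [altDescents_eq_card]
  have hsum : (Finset.univ.filter fun σ : Equiv.Perm (Fin n) => (dset n σ).card = k).card =
      ∑ S ∈ Finset.powersetCard k (Finset.Icc 1 (n-1)),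
        (Finset.univ.filter fun σ : Equiv.Perm (Fin n) => dset n σ = S).card := by
    rw [Finset.card_eq_sum_card_fiberwise (f := dset n)
      (t := Finset.powersetCard k (Finset.Icc 1 (n-1)))
      (fun σ hσ => Finset.mem_powersetCard.mpr ⟨dset_subset σ, (Finset.mem_filter.mp hσ).2⟩)]
    refine Finset.sum_congr rfl fun S hS => ?_
    congr 1
    ext σ
    simp only [Finset.mem_filter, Finset.mem_univ, true_and]
    constructor
    · rintro ⟨_, h⟩; exact h
    · intro h
      exact ⟨by rw [h]; exact (Finset.mem_powersetCard.mp hS).2, h⟩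
  calc ∑ S ∈ Finset.powersetCard k (Finset.Icc 1 (n-1)), volume (Rregion n S)
      = ∑ S ∈ Finset.powersetCard k (Finset.Icc 1 (n-1)),
          ((Finset.univ.filter fun σ : Equiv.Perm (Fin n) => dset n σ = S).card : ENNReal) *
            ((Nat.factorial n : ENNReal))⁻¹ := by
        refine Finset.sum_congr rfl fun S hS => ?_
        rw [volume_R, volume_Q (Finset.mem_powersetCard.mp hS).1]
    _ = ((∑ S ∈ Finset.powersetCard k (Finset.Icc 1 (n-1)),
          (Finset.univ.filter fun σ : Equiv.Perm (Fin n) => dset n σ = S).card : ℕ) : ENNReal) *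
            ((Nat.factorial n : ENNReal))⁻¹ := by
        rw [← Finset.sum_mul]
        push_cast
        ring
    _ = (altDescentCount n k : ENNReal) * ((Nat.factorial n : ENNReal))⁻¹ := by
        rw [hcount, hsum]
    _ = (altDescentCount n k : ENNReal) / (Nat.factorial n : ENNReal) := by
        rw [div_eq_mul_inv]
end

section
/- Let n ≥ 2 and 0 ≤ r ≤ n−2 be integers. Then the number of surjective maps f : {1,…,n} → {1,…,n−r} satisfying the alternating condition f(1) > f(2) < f(3) > f(4) < ⋯ equals Σ_{m=0}^{n−2} C(m, r) · s_n(m), where C(·,·) is the binomial coefficient. -/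
open Finset

namespace S17

instance {d : ℕ} : DecidablePred (IsAlternating (d := d)) := fun σ => by
  unfold IsAlternating; infer_instance

variable {n k : ℕ}

/-- position (as a natural number) of the value `v` under `σ`; `n` if out of range. -/
def pos (σ : Equiv.Perm (Fin n)) (v : ℕ) : ℕ :=
  if h : v < n then (σ.symm ⟨v, h⟩ : ℕ) else n

/-- the set of swap indices of `σ`, as a finset of naturals. -/
def swapSetN (σ : Equiv.Perm (Fin n)) : Finset ℕ :=
  (range (n-1)).filter (fun i => pos σ i + 1 < pos σ (i+1))

lemma pos_lt (σ : Equiv.Perm (Fin n)) {v : ℕ} (h : v < n) : pos σ v < n := by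
  simp only [pos, dif_pos h]; exact (σ.symm ⟨v, h⟩).isLt

lemma pos_apply (σ : Equiv.Perm (Fin n)) (j : Fin n) : pos σ ((σ j : ℕ)) = (j : ℕ) := by
  simp only [pos, dif_pos (σ j).isLt]
  congr 1
  rw [show (⟨((σ j : ℕ)), (σ j).isLt⟩ : Fin n) = σ j from rfl]
  exact σ.symm_apply_apply j

lemma mem_swapSetN {σ : Equiv.Perm (Fin n)} {i : ℕ} :
    i ∈ swapSetN σ ↔ i + 1 < n ∧ pos σ i + 1 < pos σ (i+1) := by
  simp only [swapSetN, mem_filter, mem_range]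
  constructor
  · rintro ⟨h1, h2⟩; exact ⟨by omega, h2⟩
  · rintro ⟨h1, h2⟩; exact ⟨by omega, h2⟩

lemma pos_eq (σ : Equiv.Perm (Fin n)) {v : ℕ} (h : v < n) :
    pos σ v = ((σ⁻¹ (⟨v, h⟩ : Fin n) : Fin n) : ℕ) := by
  unfold pos; rw [dif_pos h]; rfl

lemma swapStat_eq (σ : Equiv.Perm (Fin n)) : swapStat σ = (swapSetN σ).card := by
  classical
  rw [swapStat, Nat.card_eq_fintype_card, Fintype.card_subtype]
  apply card_nbij (fun p => ((p.1 : ℕ)))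
  · intro p hp
    simp only [mem_coe, mem_filter, mem_univ, true_and] at hp
    obtain ⟨h1, h2⟩ := hp
    have hp2 : ((p.2 : ℕ)) < n := p.2.isLt
    have hlt : (p.1 : ℕ) + 1 < n := by omega
    simp only [mem_coe]; rw [mem_swapSetN]
    refine ⟨hlt, ?_⟩
    have e1 : pos σ (p.1 : ℕ) = ((σ⁻¹ p.1 : Fin n) : ℕ) := pos_eq σ p.1.isLt
    have e2 : pos σ ((p.1 : ℕ) + 1) = ((σ⁻¹ p.2 : Fin n) : ℕ) := by
      rw [pos_eq σ hlt]
      congr 2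
      ext
      exact h1.symm
    rw [e1, e2]
    exact h2
  · intro p hp q hq hpq
    simp only [mem_coe, mem_filter, mem_univ, true_and] at hp hq
    simp only at hpq
    have h1 : p.1 = q.1 := Fin.val_injective hpq
    have h2 : p.2 = q.2 := Fin.val_injective (by rw [hp.1, hq.1, hpq])
    exact Prod.ext h1 h2
  · intro i hi
    simp only [mem_coe, mem_swapSetN] at hi
    obtain ⟨h1, h2⟩ := hi
    simp only [Set.mem_image, mem_coe, mem_filter, mem_univ, true_and]
    refine ⟨(⟨i, by omega⟩, ⟨i+1, h1⟩), ⟨rfl, ?_⟩, rfl⟩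
    rw [← pos_eq σ (show i < n by omega), ← pos_eq σ h1]
    exact h2

lemma swapSetN_card_le (hn : 2 ≤ n) (σ : Equiv.Perm (Fin n)) :
    (swapSetN σ).card ≤ n - 2 := by
  by_contra h
  push_neg at h
  have hsub : swapSetN σ ⊆ range (n-1) := filter_subset _ _
  have hle : (swapSetN σ).card ≤ n - 1 := by
    have := card_le_card hsub
    rwa [card_range] at this
  have heq : swapSetN σ = range (n-1) :=
    eq_of_subset_of_card_le hsub (by rw [card_range]; omega)
  have key : ∀ i, i ≤ n-1 → 2*i ≤ pos σ i := by
    intro i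
    induction i with
    | zero => intro _; omega
    | succ i ih =>
      intro hi
      have hmem : i ∈ swapSetN σ := by rw [heq, mem_range]; omega
      have h2 := (mem_swapSetN.mp hmem).2
      have h3 := ih (by omega)
      omega
  have h1 := key (n-1) le_rfl
  have h2 := pos_lt σ (show n-1 < n by omega)
  omega

/-! ### collapse maps -/

/-- the collapse map determined by a finite set `S` of merge indices. -/
def col (S : Finset ℕ) (v : ℕ) : ℕ := v - (S.filter (· < v)).card

lemma col_filter_le (S : Finset ℕ) (v : ℕ) : (S.filter (· < v)).card ≤ v := by
  calc (S.filter (· < v)).card ≤ (range v).card := by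
        apply card_le_card; intro x hx; simp only [mem_filter] at hx
        simpa using hx.2
    _ = v := card_range v

lemma col_succ (S : Finset ℕ) (v : ℕ) :
    col S (v+1) = col S v + (if v ∈ S then 0 else 1) := by
  have h1 : S.filter (· < v + 1) = if v ∈ S then insert v (S.filter (· < v)) else S.filter (· < v) := by
    split_ifs with hv
    · ext x; simp only [mem_filter, mem_insert]
      constructor
      · rintro ⟨hx, hlt⟩
        rcases Nat.lt_succ_iff_lt_or_eq.mp hlt with h | h
        · exact Or.inr ⟨hx, h⟩
        · exact Or.inl h
      · rintro (rfl | ⟨hx, hlt⟩)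
        · exact ⟨hv, Nat.lt_succ_self _⟩
        · exact ⟨hx, Nat.lt_succ_of_lt hlt⟩
    · ext x; simp only [mem_filter]
      constructor
      · rintro ⟨hx, hlt⟩
        rcases Nat.lt_succ_iff_lt_or_eq.mp hlt with h | h
        · exact ⟨hx, h⟩
        · exact absurd (h ▸ hx) hv
      · rintro ⟨hx, hlt⟩; exact ⟨hx, Nat.lt_succ_of_lt hlt⟩
  have hle := col_filter_le S v
  unfold col
  rw [h1]
  split_ifs with hv
  · rw [card_insert_of_notMem (by simp)]
    omega
  · omega

lemma col_zero (S : Finset ℕ) : col S 0 = 0 := by simp [col]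

lemma col_mono (S : Finset ℕ) : Monotone (col S) := by
  apply monotone_nat_of_le_succ
  intro v; rw [col_succ]; split_ifs <;> simp

lemma col_succ_le (S : Finset ℕ) (v : ℕ) : col S (v+1) ≤ col S v + 1 := by
  rw [col_succ]; split_ifs <;> omega

lemma mem_of_col_eq {S : Finset ℕ} {v w : ℕ} (h : col S v = col S w)
    {i : ℕ} (h1 : v ≤ i) (h2 : i < w) : i ∈ S := by
  by_contra hi
  have e1 : col S i + 1 = col S (i+1) := by rw [col_succ, if_neg hi]
  have l1 : col S v ≤ col S i := col_mono S h1
  have l2 : col S (i+1) ≤ col S w := col_mono S h2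
  omega

lemma mem_iff_col {S : Finset ℕ} (hS : S ⊆ range (n-1)) {i : ℕ} :
    i ∈ S ↔ i + 1 < n ∧ col S i = col S (i+1) := by
  constructor
  · intro hi
    have : i < n - 1 := by simpa using hS hi
    have := col_succ S i
    rw [if_pos hi] at this
    exact ⟨by omega, by omega⟩
  · rintro ⟨h1, h2⟩
    exact mem_of_col_eq h2 le_rfl (Nat.lt_succ_self i)

lemma col_lt {S : Finset ℕ} {r : ℕ} (hS : S ⊆ range (n-1)) (hcard : S.card = r)
    (hr : r ≤ n - 1) {v : ℕ} (hv : v < n) : col S v < n - r := by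
  have a_le := col_filter_le S v
  have hsplit : (S.filter (· < v)).card + (S.filter (fun x => ¬ x < v)).card = S.card :=
    card_filter_add_card_filter_not _
  have hb : (S.filter (fun x => ¬ x < v)).card ≤ (n-1) - v := by
    calc (S.filter (fun x => ¬ x < v)).card ≤ (Ico v (n-1)).card := by
          apply card_le_card
          intro x hx
          simp only [mem_filter] at hx
          have := mem_range.mp (hS hx.1)
          simp only [mem_Ico]
          omega
      _ = (n-1) - v := Nat.card_Ico _ _
  unfold col
  omega

lemma col_surj {S : Finset ℕ} {r : ℕ} (hS : S ⊆ range (n-1)) (hcard : S.card = r)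
    (hn : 1 ≤ n) {w : ℕ} (hw : w < n - r) : ∃ v < n, col S v = w := by
  have key : ∀ v, ∀ w' ≤ col S v, ∃ u ≤ v, col S u = w' := by
    intro v
    induction v with
    | zero =>
      intro w' hw'
      rw [col_zero] at hw'
      exact ⟨0, le_rfl, by rw [col_zero]; omega⟩
    | succ v ih =>
      intro w' hw'
      rcases le_or_gt w' (col S v) with h | h
      · obtain ⟨u, hu, he⟩ := ih w' h
        exact ⟨u, by omega, he⟩
      · have hle := col_succ_le S v
        exact ⟨v+1, le_rfl, by omega⟩
  have hfil : S.filter (· < n-1) = S := by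
    apply filter_true_of_mem
    intro x hx
    exact mem_range.mp (hS hx)
  have hc : col S (n-1) = (n-1) - r := by
    unfold col; rw [hfil, hcard]
  obtain ⟨u, hu, he⟩ := key (n-1) w (by omega)
  exact ⟨u, by omega, he⟩

/-- Chain lemma: if all merge indices are swaps, collapsed-equal values have
positions at least 2 apart. -/
lemma pos_lt_pos {σ : Equiv.Perm (Fin n)} {S : Finset ℕ} (hS : S ⊆ swapSetN σ)
    {a b : ℕ} (hab : a < b) (hb : b < n) (h : col S a = col S b) :
    pos σ a + 1 < pos σ b := by
  have hmem : ∀ i, a ≤ i → i < b → i ∈ S := fun i h1 h2 => mem_of_col_eq h h1 h2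
  have key : ∀ b', a + 1 ≤ b' → b' ≤ b → pos σ a + 1 < pos σ b' := by
    intro b'
    refine Nat.le_induction ?_ ?_ b'
    · intro hb'
      have := (mem_swapSetN.mp (hS (hmem a le_rfl (by omega)))).2
      omega
    · intro m hm ih hmb
      have h1 := ih (by omega)
      have h2 := (mem_swapSetN.mp (hS (hmem m (by omega) (by omega)))).2
      omega
  exact key b (by omega) le_rfl

/-! ### standardization -/

def lexlt (f : Fin n → Fin k) (a b : Fin n) : Prop :=
  f a < f b ∨ (f a = f b ∧ a < b)

instance (f : Fin n → Fin k) (a b : Fin n) : Decidable (lexlt f a b) := by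
  unfold lexlt; infer_instance

lemma lexlt_total (f : Fin n → Fin k) {a b : Fin n} (hab : a ≠ b) :
    lexlt f a b ∨ lexlt f b a := by
  rcases lt_trichotomy (f a) (f b) with h | h | h
  · exact Or.inl (Or.inl h)
  · rcases lt_or_gt_of_ne (fun e => hab e) with h' | h'
    · exact Or.inl (Or.inr ⟨h, h'⟩)
    · exact Or.inr (Or.inr ⟨h.symm, h'⟩)
  · exact Or.inr (Or.inl h)

lemma lexlt_asymm (f : Fin n → Fin k) {a b : Fin n} (h : lexlt f a b) : ¬ lexlt f b a := by
  rcases h with h | ⟨h1, h2⟩ <;> rintro (h' | ⟨h1', h2'⟩) <;>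
    first
      | exact absurd h' (not_lt.mpr (le_of_lt h))
      | exact absurd h (not_lt.mpr (le_of_eq h1'))
      | exact absurd h' (not_lt.mpr (le_of_eq h1))
      | exact absurd h2' (not_lt.mpr (le_of_lt h2))

def rk (f : Fin n → Fin k) (j : Fin n) : ℕ := (univ.filter (fun a => lexlt f a j)).card

lemma rk_lt (f : Fin n → Fin k) (j : Fin n) : rk f j < n := by
  have : (univ.filter (fun a => lexlt f a j)) ⊆ univ.erase j := by
    intro a ha
    simp only [mem_filter] at ha
    apply mem_erase_of_ne_of_mem _ (mem_univ a)
    rintro rfl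
    exact lexlt_asymm f ha.2 ha.2
  calc rk f j ≤ (univ.erase j).card := card_le_card this
    _ < n := by
      have hn : 0 < n := j.pos
      rw [card_erase_of_mem (mem_univ j)]; simp [Fintype.card_fin]; omega

lemma rk_strict (f : Fin n → Fin k) {a b : Fin n} (h : lexlt f a b) : rk f a < rk f b := by
  have hsub : insert a (univ.filter (fun x => lexlt f x a)) ⊆ univ.filter (fun x => lexlt f x b) := by
    intro x hx
    rcases mem_insert.mp hx with rfl | hx
    · simp [h]
    · simp only [mem_filter] at hx ⊢
      refine ⟨mem_univ x, ?_⟩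
      rcases hx.2 with h1 | ⟨h1, h2⟩ <;> rcases h with h3 | ⟨h3, h4⟩
      · exact Or.inl (h1.trans h3)
      · exact Or.inl (h3 ▸ h1)
      · exact Or.inl (h1 ▸ h3)
      · exact Or.inr ⟨h1.trans h3, h2.trans h4⟩
  have := card_le_card hsub
  rw [card_insert_of_notMem (by
    simp only [mem_filter, mem_univ, true_and]
    exact fun h' => lexlt_asymm f h' h')] at this
  unfold rk
  omega

lemma rk_lt_iff (f : Fin n → Fin k) {a b : Fin n} : rk f a < rk f b ↔ lexlt f a b := by
  constructor
  · intro h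
    by_contra hl
    rcases eq_or_ne a b with rfl | hab
    · omega
    · rcases lexlt_total f hab with h' | h'
      · exact hl h'
      · exact absurd (rk_strict f h') (by omega)
  · exact rk_strict f

/-- the standardization of `f` as a permutation. -/
noncomputable def std (f : Fin n → Fin k) : Equiv.Perm (Fin n) :=
  Equiv.ofBijective (fun j => (⟨rk f j, rk_lt f j⟩ : Fin n))
    ((Finite.injective_iff_bijective).mp (by
      intro a b hab
      simp only [Fin.mk.injEq] at hab
      by_contra hne
      rcases lexlt_total f hne with h | h
      · exact absurd (rk_strict f h) (by omega)
      · exact absurd (rk_strict f h) (by omega)))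

lemma std_apply (f : Fin n → Fin k) (j : Fin n) : ((std f j : Fin n) : ℕ) = rk f j := rfl

lemma std_symm (f : Fin n → Fin k) (j : Fin n) {h : rk f j < n} :
    (std f).symm ⟨rk f j, h⟩ = j := by
  apply (std f).injective
  rw [Equiv.apply_symm_apply]
  ext
  exact (std_apply f j).symm

/-- the value of `f` at the position of rank `i`. -/
noncomputable def F (f : Fin n → Fin k) (i : ℕ) : ℕ :=
  if h : i < n then (f ((std f).symm ⟨i, h⟩) : ℕ) else k

lemma F_rk (f : Fin n → Fin k) (j : Fin n) : F f (rk f j) = (f j : ℕ) := by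
  unfold F
  rw [dif_pos (rk_lt f j), std_symm]

lemma rk_symm (f : Fin n → Fin k) {i : ℕ} (h : i < n) :
    rk f ((std f).symm ⟨i, h⟩) = i := by
  have := congrArg Fin.val ((std f).apply_symm_apply ⟨i, h⟩)
  rw [std_apply] at this
  exact this

lemma F_def (f : Fin n → Fin k) {i : ℕ} (h : i < n) :
    F f i = (f ((std f).symm ⟨i, h⟩) : ℕ) := by
  unfold F; rw [dif_pos h]

lemma F_mono (f : Fin n → Fin k) {i i' : ℕ} (h : i ≤ i') (h' : i' < n) :
    F f i ≤ F f i' := by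
  have hi : i < n := lt_of_le_of_lt (h.trans le_rfl) (lt_of_le_of_lt le_rfl h')
  rcases eq_or_lt_of_le h with rfl | hlt
  · exact le_rfl
  · set p := (std f).symm ⟨i, hi⟩ with hp
    set q := (std f).symm ⟨i', h'⟩ with hq
    have hrp : rk f p = i := rk_symm f hi
    have hrq : rk f q = i' := rk_symm f h'
    have hlex : lexlt f p q := (rk_lt_iff f).mp (by rw [hrp, hrq]; exact hlt)
    have hle : (f p : ℕ) ≤ (f q : ℕ) := by
      rcases hlex with h1 | ⟨h1, _⟩
      · exact le_of_lt h1
      · exact le_of_eq (by rw [h1])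
    rw [F_def f hi, F_def f h']
    exact hle

lemma F_zero (f : Fin n → Fin k) (hf : Function.Surjective f) (hn : 0 < n) : F f 0 = 0 := by
  rw [F_def f hn]
  set p := (std f).symm ⟨0, hn⟩ with hp
  by_contra hne
  have hk : 0 < k := (f p).pos
  obtain ⟨j, hj⟩ := hf ⟨0, hk⟩
  have hlex : lexlt f j p := Or.inl (by
    rw [hj]
    exact Fin.lt_def.mpr (by simpa using Nat.pos_of_ne_zero hne))
  have := rk_strict f hlex
  rw [rk_symm f hn] at this
  omega

lemma F_last (f : Fin n → Fin k) (hf : Function.Surjective f) (hn : 0 < n) :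
    F f (n-1) = k - 1 := by
  have hn' : n - 1 < n := by omega
  rw [F_def f hn']
  set p := (std f).symm ⟨n-1, hn'⟩ with hp
  have hk : 0 < k := (f p).pos
  obtain ⟨j, hj⟩ := hf ⟨k-1, by omega⟩
  have hub : (f p : ℕ) ≤ k - 1 := by have := (f p).isLt; omega
  by_contra hne
  have hlex : lexlt f p j := Or.inl (by
    rw [hj]
    exact Fin.lt_def.mpr (by simp; omega))
  have h1 := rk_strict f hlex
  rw [rk_symm f hn'] at h1
  have h2 := rk_lt f j
  omega

lemma F_step (f : Fin n → Fin k) (hf : Function.Surjective f) {i : ℕ} (h : i + 1 < n) :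
    F f (i+1) ≤ F f i + 1 := by
  by_contra hc
  push_neg at hc
  have hi : i < n := by omega
  set p := (std f).symm ⟨i, hi⟩ with hp
  set q := (std f).symm ⟨i+1, h⟩ with hq
  rw [F_def f h, F_def f hi] at hc
  rw [← hp, ← hq] at hc
  have hmid : (f p : ℕ) + 1 < k := by
    have := (f q).isLt
    omega
  obtain ⟨j, hj⟩ := hf ⟨(f p : ℕ) + 1, hmid⟩
  have hlex1 : lexlt f p j := Or.inl (by rw [hj]; exact Fin.lt_def.mpr (by simp))
  have hlex2 : lexlt f j q := Or.inl (by rw [hj]; exact Fin.lt_def.mpr (by simpa using hc))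
  have h1 := rk_strict f hlex1
  have h2 := rk_strict f hlex2
  rw [rk_symm f hi] at h1
  rw [rk_symm f h] at h2
  omega

/-- merge set of `f` : ranks `i` such that ranks `i` and `i+1` carry equal `f`-values. -/
noncomputable def SfN (f : Fin n → Fin k) : Finset ℕ :=
  (range (n-1)).filter (fun i => F f i = F f (i+1))

lemma merge_count (f : Fin n → Fin k) (hf : Function.Surjective f) :
    ∀ v : ℕ, v < n →
    ((range v).filter (fun i => F f i = F f (i+1))).card + F f v = v := by
  intro v
  induction v with
  | zero =>
    intro hv
    simpa using F_zero f hf hv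
  | succ v ih =>
    intro hv
    have hv' : v < n := by omega
    have ihv := ih hv'
    have hmono := F_mono f (show v ≤ v+1 by omega) (show v+1 < n by omega)
    have hstep := F_step f hf hv
    rw [range_add_one, filter_insert]
    by_cases hc : F f v = F f (v+1)
    · rw [if_pos hc, card_insert_of_notMem (by simp)]
      omega
    · rw [if_neg hc]
      omega

lemma SfN_card (f : Fin n → Fin k) (hf : Function.Surjective f) (hn : 1 ≤ n) (hk : 1 ≤ k) :
    (SfN f).card + k = n := by
  have h1 := merge_count f hf (n-1) (by omega)
  have h2 := F_last f hf (by omega)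
  unfold SfN
  omega

lemma col_SfN_rk (f : Fin n → Fin k) (hf : Function.Surjective f) (hn : 1 ≤ n) (j : Fin n) :
    col (SfN f) (rk f j) = (f j : ℕ) := by
  have hrk : rk f j < n := rk_lt f j
  have hfil : (SfN f).filter (· < rk f j) = (range (rk f j)).filter (fun i => F f i = F f (i+1)) := by
    ext x
    simp only [SfN, mem_filter, mem_range]
    constructor
    · rintro ⟨⟨h1, h2⟩, h3⟩
      exact ⟨h3, h2⟩
    · rintro ⟨h1, h2⟩
      exact ⟨⟨by omega, h2⟩, h1⟩
  have h1 := merge_count f hf (rk f j) hrk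
  have h2 := F_rk f j
  unfold col
  rw [hfil]
  omega

/-! ### the forward direction : standardization facts -/

lemma std_alt (f : Fin n → Fin k)
    (hf : ∀ i j : Fin n, (j : ℕ) = (i : ℕ) + 1 →
      (((i : ℕ) % 2 = 0 → f j < f i) ∧ ((i : ℕ) % 2 = 1 → f i < f j))) :
    IsAlternating (std f) := by
  intro i j hj
  constructor
  · intro hpar
    have h := (hf i j hj).1 hpar
    exact Fin.lt_def.mpr (by rw [std_apply, std_apply]; exact rk_strict f (Or.inl h))
  · intro hpar
    have h := (hf i j hj).2 hpar
    exact Fin.lt_def.mpr (by rw [std_apply, std_apply]; exact rk_strict f (Or.inl h))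

lemma SfN_subset (f : Fin n → Fin k)
    (hf : ∀ i j : Fin n, (j : ℕ) = (i : ℕ) + 1 →
      (((i : ℕ) % 2 = 0 → f j < f i) ∧ ((i : ℕ) % 2 = 1 → f i < f j))) :
    SfN f ⊆ swapSetN (std f) := by
  intro i hi
  simp only [SfN, mem_filter, mem_range] at hi
  obtain ⟨hi1, hFeq⟩ := hi
  have h1 : i + 1 < n := by omega
  have hi' : i < n := by omega
  set p := (std f).symm ⟨i, hi'⟩ with hp
  set q := (std f).symm ⟨i+1, h1⟩ with hq
  have hfpq : f p = f q := Fin.val_injective (by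
    rw [← F_def f hi', ← F_def f h1]; exact hFeq)
  have hrp : rk f p = i := rk_symm f hi'
  have hrq : rk f q = i+1 := rk_symm f h1
  have hlex : lexlt f p q := (rk_lt_iff f).mp (by rw [hrp, hrq]; omega)
  have hpq : (p : ℕ) < (q : ℕ) := by
    rcases hlex with h | ⟨_, h⟩
    · exact absurd hfpq (ne_of_lt h)
    · exact h
  have hne : (p : ℕ) + 1 ≠ (q : ℕ) := by
    intro hc
    have halt := hf p q hc.symm
    rcases Nat.even_or_odd (p : ℕ) with he | ho
    · have := halt.1 (Nat.even_iff.mp he)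
      rw [hfpq] at this
      exact lt_irrefl _ this
    · have := halt.2 (Nat.odd_iff.mp ho)
      rw [hfpq] at this
      exact lt_irrefl _ this
  rw [mem_swapSetN]
  refine ⟨h1, ?_⟩
  have e1 : pos (std f) i = (p : ℕ) := by unfold pos; rw [dif_pos hi']
  have e2 : pos (std f) (i+1) = (q : ℕ) := by unfold pos; rw [dif_pos h1]
  omega

/-! ### the backward direction : collapse maps -/

lemma lex_of_lt {σ : Equiv.Perm (Fin n)} {S : Finset ℕ} (hS : S ⊆ swapSetN σ)
    {a b : Fin n} (hab : σ a < σ b) :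
    col S ((σ a : ℕ)) < col S ((σ b : ℕ)) ∨
      (col S ((σ a : ℕ)) = col S ((σ b : ℕ)) ∧ (a : ℕ) + 1 < (b : ℕ)) := by
  have hmono : col S ((σ a : ℕ)) ≤ col S ((σ b : ℕ)) := col_mono S (le_of_lt hab)
  rcases eq_or_lt_of_le hmono with heq | hlt
  · right
    refine ⟨heq, ?_⟩
    have := pos_lt_pos hS (show ((σ a : ℕ)) < ((σ b : ℕ)) from hab) (σ b).isLt heq
    rwa [pos_apply, pos_apply] at this
  · left; exact hlt

variable {r : ℕ}

/-- the collapsed map `col S ∘ σ`. -/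
def mkF (σ : Equiv.Perm (Fin n)) (S : Finset ℕ) (hS : S ⊆ swapSetN σ) (hcard : S.card = r)
    (hr : r ≤ n - 2) : Fin n → Fin (n - r) :=
  fun j => ⟨col S ((σ j : ℕ)),
    col_lt (hS.trans (filter_subset _ _)) hcard (by omega) (σ j).isLt⟩

lemma mkF_alt {σ : Equiv.Perm (Fin n)} (hσ : IsAlternating σ) {S : Finset ℕ}
    (hS : S ⊆ swapSetN σ) (hcard : S.card = r) (hr : r ≤ n - 2) :
    ∀ i j : Fin n, (j : ℕ) = (i : ℕ) + 1 →
      (((i : ℕ) % 2 = 0 → mkF σ S hS hcard hr j < mkF σ S hS hcard hr i) ∧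
       ((i : ℕ) % 2 = 1 → mkF σ S hS hcard hr i < mkF σ S hS hcard hr j)) := by
  intro i j hj
  constructor
  · intro hpar
    have h := (hσ i j hj).1 hpar
    rcases lex_of_lt hS h with h' | ⟨h1, h2⟩
    · exact Fin.mk_lt_mk.mpr h'
    · omega
  · intro hpar
    have h := (hσ i j hj).2 hpar
    rcases lex_of_lt hS h with h' | ⟨h1, h2⟩
    · exact Fin.mk_lt_mk.mpr h'
    · omega

lemma mkF_surj {σ : Equiv.Perm (Fin n)} {S : Finset ℕ}
    (hS : S ⊆ swapSetN σ) (hcard : S.card = r) (hr : r ≤ n - 2) (hn : 2 ≤ n) :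
    Function.Surjective (mkF σ S hS hcard hr) := by
  intro w
  obtain ⟨v, hv, hcv⟩ := col_surj (hS.trans (filter_subset _ _)) hcard (by omega)
    (show (w : ℕ) < n - r from w.isLt)
  refine ⟨σ.symm ⟨v, hv⟩, ?_⟩
  apply Fin.val_injective
  show col S ((σ (σ.symm ⟨v, hv⟩) : ℕ)) = (w : ℕ)
  rw [Equiv.apply_symm_apply]
  exact hcv

lemma card_filter_apply_lt (σ : Equiv.Perm (Fin n)) (x : Fin n) :
    (univ.filter (fun a => σ a < x)).card = (x : ℕ) := by
  have h : (univ.filter (fun a => σ a < x)).card = (univ.filter (fun y => y < x)).card := by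
    apply card_nbij (fun a => σ a)
    · intro a ha
      simp only [mem_coe, mem_filter, mem_univ, true_and] at ha ⊢
      exact ha
    · exact σ.injective.injOn
    · intro y hy
      simp only [mem_coe, mem_filter, mem_univ, true_and, Set.mem_image] at hy ⊢
      exact ⟨σ.symm y, by simp [hy]⟩
  rw [h, ← Fin.card_Iio x]
  congr 1
  ext y
  simp

lemma rk_mkF {σ : Equiv.Perm (Fin n)} {S : Finset ℕ}
    (hS : S ⊆ swapSetN σ) (hcard : S.card = r) (hr : r ≤ n - 2) (j : Fin n) :
    rk (mkF σ S hS hcard hr) j = (σ j : ℕ) := by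
  set g := mkF σ S hS hcard hr with hg
  have hset : univ.filter (fun a => lexlt g a j) = univ.filter (fun a => σ a < σ j) := by
    ext a
    simp only [mem_filter, mem_univ, true_and]
    constructor
    · intro hl
      by_contra hc
      push_neg at hc
      rcases eq_or_lt_of_le hc with heq | hlt
      · have : a = j := σ.injective heq.symm
        subst this
        exact lexlt_asymm g hl hl
      · have hlex : lexlt g j a := by
          rcases lex_of_lt hS hlt with h' | ⟨h1, h2⟩
          · exact Or.inl (Fin.mk_lt_mk.mpr h')
          · exact Or.inr ⟨Fin.val_injective h1, Fin.lt_def.mpr (by omega)⟩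
        exact lexlt_asymm g hl hlex
    · intro hl
      rcases lex_of_lt hS hl with h' | ⟨h1, h2⟩
      · exact Or.inl (Fin.mk_lt_mk.mpr h')
      · exact Or.inr ⟨Fin.val_injective h1, Fin.lt_def.mpr (by omega)⟩
  unfold rk
  rw [hset, card_filter_apply_lt]

lemma std_mkF {σ : Equiv.Perm (Fin n)} {S : Finset ℕ}
    (hS : S ⊆ swapSetN σ) (hcard : S.card = r) (hr : r ≤ n - 2) :
    std (mkF σ S hS hcard hr) = σ :=
  Equiv.ext fun j => Fin.val_injective (by rw [std_apply, rk_mkF hS hcard hr j])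

lemma SfN_mkF {σ : Equiv.Perm (Fin n)} {S : Finset ℕ}
    (hS : S ⊆ swapSetN σ) (hcard : S.card = r) (hr : r ≤ n - 2) :
    SfN (mkF σ S hS hcard hr) = S := by
  set g := mkF σ S hS hcard hr with hg
  have hstd : std g = σ := std_mkF hS hcard hr
  have hF : ∀ i : ℕ, ∀ h : i < n, F g i = col S i := by
    intro i h
    rw [F_def g h, hstd]
    show col S ((σ (σ.symm ⟨i, h⟩) : ℕ)) = col S i
    rw [Equiv.apply_symm_apply]
  ext i
  simp only [SfN, mem_filter, mem_range]
  constructor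
  · rintro ⟨h1, h2⟩
    rw [hF i (by omega), hF (i+1) (by omega)] at h2
    exact (mem_iff_col (hS.trans (filter_subset _ _))).mpr ⟨by omega, h2⟩
  · intro hi
    obtain ⟨h1, h2⟩ := (mem_iff_col (hS.trans (filter_subset _ _))).mp hi
    refine ⟨by omega, ?_⟩
    rw [hF i (by omega), hF (i+1) (by omega)]
    exact h2

end S17

theorem stmt17 (n r : ℕ) (hn : 2 ≤ n) (hr : r ≤ n - 2) :
    Nat.card {f : Fin n → Fin (n-r) //
        Function.Surjective f ∧
        ∀ i j : Fin n, (j : ℕ) = (i : ℕ) + 1 →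
          (((i : ℕ) % 2 = 0 → f j < f i) ∧ ((i : ℕ) % 2 = 1 → f i < f j))}
      = ∑ m ∈ Finset.range (n-1), Nat.choose m r * sSwap n m := by
  classical
  have hlt : ∀ σ : Equiv.Perm (Fin n), (S17.swapSetN σ).card < n - 1 :=
    fun σ => lt_of_le_of_lt (S17.swapSetN_card_le hn σ) (by omega)
  let Ψ : (Σ σ : {σ : Equiv.Perm (Fin n) // IsAlternating σ},
        {S : Finset ℕ // S ⊆ S17.swapSetN σ.1 ∧ S.card = r}) →
      {f : Fin n → Fin (n-r) //
        Function.Surjective f ∧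
        ∀ i j : Fin n, (j : ℕ) = (i : ℕ) + 1 →
          (((i : ℕ) % 2 = 0 → f j < f i) ∧ ((i : ℕ) % 2 = 1 → f i < f j))} :=
    fun x => ⟨S17.mkF x.1.1 x.2.1 x.2.2.1 x.2.2.2 hr,
      S17.mkF_surj x.2.2.1 x.2.2.2 hr hn,
      S17.mkF_alt x.1.2 x.2.2.1 x.2.2.2 hr⟩
  have hinj : Function.Injective Ψ := by
    rintro ⟨⟨σ1, hσ1⟩, ⟨S1, hS1, hc1⟩⟩ ⟨⟨σ2, hσ2⟩, ⟨S2, hS2, hc2⟩⟩ hxy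
    have hgf : S17.mkF σ1 S1 hS1 hc1 hr = S17.mkF σ2 S2 hS2 hc2 hr :=
      congrArg Subtype.val hxy
    have h1 : σ1 = σ2 :=
      (S17.std_mkF hS1 hc1 hr).symm.trans
        ((congrArg S17.std hgf).trans (S17.std_mkF hS2 hc2 hr))
    subst h1
    have h2 : S1 = S2 :=
      (S17.SfN_mkF hS1 hc1 hr).symm.trans
        ((congrArg S17.SfN hgf).trans (S17.SfN_mkF hS2 hc2 hr))
    subst h2
    rfl
  have hsurj : Function.Surjective Ψ := by
    rintro ⟨f, hfs, hfa⟩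
    have hcard : (S17.SfN f).card = r := by
      have := S17.SfN_card f hfs (by omega) (by omega)
      omega
    refine ⟨⟨⟨S17.std f, S17.std_alt f hfa⟩, ⟨S17.SfN f, S17.SfN_subset f hfa, hcard⟩⟩, ?_⟩
    apply Subtype.ext
    funext j
    apply Fin.val_injective
    show S17.col (S17.SfN f) ((S17.std f j : ℕ)) = (f j : ℕ)
    rw [S17.std_apply]
    exact S17.col_SfN_rk f hfs (by omega) j
  have h0 := Nat.card_congr (Equiv.ofBijective Ψ ⟨hinj, hsurj⟩).symm
  rw [h0]
  have e2 : (Σ σ : {σ : Equiv.Perm (Fin n) // IsAlternating σ},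
        {S : Finset ℕ // S ⊆ S17.swapSetN σ.1 ∧ S.card = r}) ≃
      Σ σ : {σ : Equiv.Perm (Fin n) //
          σ ∈ (Finset.univ : Finset (Equiv.Perm (Fin n))).filter IsAlternating},
        {S : Finset ℕ // S ∈ (S17.swapSetN σ.1).powersetCard r} :=
    Equiv.sigmaCongr (Equiv.subtypeEquivRight (fun σ => by simp)) (fun σ =>
      Equiv.subtypeEquivRight (fun S => by rw [Finset.mem_powersetCard]; exact Iff.rfl))
  rw [Nat.card_congr e2, Nat.card_eq_fintype_card, Fintype.card_sigma]
  have hstep : ∑ σ : {σ : Equiv.Perm (Fin n) //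
        σ ∈ (Finset.univ : Finset (Equiv.Perm (Fin n))).filter IsAlternating},
        Fintype.card {S : Finset ℕ // S ∈ (S17.swapSetN σ.1).powersetCard r}
      = ∑ σ ∈ (Finset.univ : Finset (Equiv.Perm (Fin n))).filter IsAlternating,
        ((S17.swapSetN σ).card).choose r := by
    rw [← Finset.sum_coe_sort
      ((Finset.univ : Finset (Equiv.Perm (Fin n))).filter IsAlternating)
      (fun σ => ((S17.swapSetN σ).card).choose r)]
    apply Finset.sum_congr rfl
    intro σ _
    rw [Fintype.card_coe, Finset.card_powersetCard]
  rw [hstep]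
  have hfib := Finset.sum_fiberwise_of_maps_to
    (s := (Finset.univ : Finset (Equiv.Perm (Fin n))).filter IsAlternating)
    (t := Finset.range (n-1)) (g := fun σ => (S17.swapSetN σ).card)
    (fun σ _ => Finset.mem_range.mpr (hlt σ))
    (fun σ => ((S17.swapSetN σ).card).choose r)
  rw [← hfib]
  apply Finset.sum_congr rfl
  intro m hm
  have hss : sSwap n m
      = (((Finset.univ : Finset (Equiv.Perm (Fin n))).filter IsAlternating).filter
          (fun σ : Equiv.Perm (Fin n) => (S17.swapSetN σ).card = m)).card := by
    rw [sSwap, Nat.card_eq_fintype_card, Fintype.card_subtype, Finset.filter_filter]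
    congr 1
    ext σ
    simp only [Finset.mem_filter, S17.swapStat_eq]
  rw [hss]
  rw [Finset.sum_congr rfl (fun σ hσ => by
    rw [(Finset.mem_filter.mp hσ).2])]
  rw [Finset.sum_const, smul_eq_mul, mul_comm]
end
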